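/- arXiv:0911.2077 — 14 statements merged into one kernel-verified Lean document; each statement's English description precedes it below -/
import Mathlib

section
/- For odd n, P[B(p,n+2) ≥ (n+2)/2] − P[B(p,n) ≥ n/2] = (p − 1/2) · C(n+1, (n+1)/2) · (p(1−p))^{(n+1)/2}. -/
open Real

noncomputable def binomTail (n k : ℕ) (p : ℝ) : ℝ :=
  ∑ h ∈ Finset.Icc k n, (n.choose h : ℝ) * p ^ h * (1 - p) ^ (n - h)

lemma binomTail_of_gt {n k : ℕ} (h : n < k) (p : ℝ) : binomTail n k p = 0 := by
  unfold binomTail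
  rw [Finset.Icc_eq_empty (by omega), Finset.sum_empty]

lemma binomTail_succ (N k : ℕ) (p : ℝ) :
    binomTail (N + 1) (k + 1) p
      = p * binomTail N k p + (1 - p) * binomTail N (k + 1) p := by
  rcases le_or_gt k N with hk | hk
  · unfold binomTail
    rw [← Finset.map_add_right_Icc k N 1, Finset.sum_map]
    simp only [addRightEmbedding_apply]
    have key : ∀ x ∈ Finset.Icc k N,
        (((N + 1).choose (x + 1) : ℝ) * p ^ (x + 1) * (1 - p) ^ (N + 1 - (x + 1)))
          = p * ((N.choose x : ℝ) * p ^ x * (1 - p) ^ (N - x))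
            + (N.choose (x + 1) : ℝ) * p ^ (x + 1) * (1 - p) ^ (N - x) := by
      intro x hx
      have hhh : N + 1 - (x + 1) = N - x := by omega
      rw [hhh, Nat.choose_succ_succ]
      push_cast [Nat.succ_eq_add_one]
      ring
    rw [Finset.sum_congr rfl key, Finset.sum_add_distrib, ← Finset.mul_sum]
    congr 1
    have hmap : ∑ h ∈ Finset.Icc (k + 1) (N + 1), ((N.choose h : ℝ) * p ^ h * (1 - p) ^ (N + 1 - h))
        = ∑ x ∈ Finset.Icc k N, ((N.choose (x + 1) : ℝ) * p ^ (x + 1) * (1 - p) ^ (N - x)) := by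
      rw [← Finset.map_add_right_Icc k N 1, Finset.sum_map]
      simp only [addRightEmbedding_apply, Nat.add_sub_add_right]
    rw [← hmap, Finset.sum_Icc_succ_top (by omega : k + 1 ≤ N + 1), Nat.choose_succ_self]
    have h3 : ∀ x ∈ Finset.Icc (k + 1) N,
        ((N.choose x : ℝ) * p ^ x * (1 - p) ^ (N + 1 - x))
          = (1 - p) * ((N.choose x : ℝ) * p ^ x * (1 - p) ^ (N - x)) := by
      intro x hx
      have hxN : x ≤ N := (Finset.mem_Icc.mp hx).2
      have : N + 1 - x = (N - x) + 1 := by omega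
      rw [this, pow_succ]
      ring
    rw [Finset.sum_congr rfl h3, ← Finset.mul_sum]
    push_cast
    ring
  · rw [binomTail_of_gt (by omega) p, binomTail_of_gt (by omega) p,
      binomTail_of_gt (by omega) p]
    ring

lemma binomTail_pred (N k : ℕ) (hk : k ≤ N) (p : ℝ) :
    binomTail N k p = (N.choose k : ℝ) * p ^ k * (1 - p) ^ (N - k) + binomTail N (k + 1) p := by
  unfold binomTail
  rw [Finset.Icc_eq_cons_Ioc hk, Finset.sum_cons, ← Finset.Icc_add_one_left_eq_Ioc]

theorem stmt0 (n : ℕ) (hn : Odd n) (p : ℝ) (hp0 : 0 ≤ p) (hp1 : p ≤ 1) :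
    binomTail (n + 2) ((n + 3) / 2) p - binomTail n ((n + 1) / 2) p
      = (p - 1 / 2) * ((n + 1).choose ((n + 1) / 2) : ℝ) * (p * (1 - p)) ^ ((n + 1) / 2) := by
  obtain ⟨m, rfl⟩ := hn
  have e1 : (2 * m + 1 + 3) / 2 = m + 2 := by omega
  have e2 : (2 * m + 1 + 1) / 2 = m + 1 := by omega
  rw [e1, e2]
  have s1 : binomTail (2 * m + 1 + 2) (m + 2) p
      = p * binomTail (2 * m + 2) (m + 1) p + (1 - p) * binomTail (2 * m + 2) (m + 2) p := by
    have := binomTail_succ (2 * m + 2) (m + 1) p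
    convert this using 3 <;> omega
  have s2 : binomTail (2 * m + 2) (m + 1) p
      = p * binomTail (2 * m + 1) m p + (1 - p) * binomTail (2 * m + 1) (m + 1) p := by
    have := binomTail_succ (2 * m + 1) m p
    convert this using 3 <;> omega
  have s3 : binomTail (2 * m + 2) (m + 2) p
      = p * binomTail (2 * m + 1) (m + 1) p + (1 - p) * binomTail (2 * m + 1) (m + 2) p := by
    have := binomTail_succ (2 * m + 1) (m + 1) p
    convert this using 3 <;> omega
  have s4 : binomTail (2 * m + 1) m p
      = ((2 * m + 1).choose m : ℝ) * p ^ m * (1 - p) ^ (m + 1) + binomTail (2 * m + 1) (m + 1) p := by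
    have e : 2 * m + 1 - m = m + 1 := by omega
    have := binomTail_pred (2 * m + 1) m (by omega) p
    rw [e] at this
    exact this
  have s5 : binomTail (2 * m + 1) (m + 1) p
      = ((2 * m + 1).choose (m + 1) : ℝ) * p ^ (m + 1) * (1 - p) ^ m
        + binomTail (2 * m + 1) (m + 2) p := by
    have e : 2 * m + 1 - (m + 1) = m := by omega
    have := binomTail_pred (2 * m + 1) (m + 1) (by omega) p
    rw [e] at this
    exact this
  have hc1 : (2 * m + 1).choose m = (2 * m + 1).choose (m + 1) := by
    rw [← Nat.choose_symm (by omega : m + 1 ≤ 2 * m + 1)]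
    congr 1
    omega
  have hc2 : ((2 * m + 1 + 1).choose (m + 1) : ℝ)
      = ((2 * m + 1).choose m : ℝ) + ((2 * m + 1).choose (m + 1) : ℝ) := by
    rw [Nat.choose_succ_succ]
    push_cast
    ring
  rw [s1, s2, s3, s4, s5, hc2, hc1, mul_pow]
  ring
end

section
/- For odd n, P[B(p,n) ≥ n/2] = p − (1/2 − p) · Σ_{j=1}^{(n−1)/2} C(2j,j) (p(1−p))^j. -/
open Real

lemma binomTail_range (n k : ℕ) (p : ℝ) :
    binomTail n k p
      = ∑ i ∈ Finset.range (n + 1 - k),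
          (n.choose (k + i) : ℝ) * p ^ (k + i) * (1 - p) ^ (n - (k + i)) := by
  unfold binomTail
  rw [← Finset.Ico_add_one_right_eq_Icc, Finset.sum_Ico_eq_sum_range]

lemma binomTail_succ_left (n k : ℕ) (hk : k ≤ n) (p : ℝ) :
    binomTail n k p = (n.choose k : ℝ) * p ^ k * (1 - p) ^ (n - k) + binomTail n (k + 1) p := by
  unfold binomTail
  rw [show Finset.Icc k n = insert k (Finset.Icc (k+1) n) by ext x; simp; omega,
    Finset.sum_insert (by simp)]

lemma binomTail_rec (n k : ℕ) (hk : k ≤ n) (p : ℝ) :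
    binomTail (n + 1) (k + 1) p
      = (1 - p) * binomTail n (k + 1) p + p * binomTail n k p := by
  rw [binomTail_range, binomTail_range, binomTail_range]
  rw [show n + 1 + 1 - (k + 1) = (n - k) + 1 from by omega,
      show n + 1 - (k + 1) = n - k from by omega,
      show n + 1 - k = (n - k) + 1 from by omega]
  set N := n - k with hN
  have key : ∀ i ∈ Finset.range (N + 1),
      ((n+1).choose (k+1+i) : ℝ) * p ^ (k+1+i) * (1 - p) ^ (n+1-(k+1+i))
        = p * ((n.choose (k+i) : ℝ) * p ^ (k+i) * (1 - p) ^ (n-(k+i)))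
          + ((n.choose (k+1+i) : ℝ) * p ^ (k+1+i) * (1 - p) ^ (n+1-(k+1+i))) := by
    intro i hi
    simp only [Finset.mem_range] at hi
    rw [show k+1+i = (k+i)+1 from by omega, Nat.choose_succ_succ,
      show n+1-(k+i+1) = n-(k+i) from by omega]
    push_cast
    ring
  rw [Finset.sum_congr rfl key, Finset.sum_add_distrib, ← Finset.mul_sum, add_comm]
  congr 1
  rw [Finset.sum_range_succ, show (n:ℕ)+1-(k+1+N) = 0 from by omega,
    show k+1+N = n+1 from by omega, Nat.choose_succ_self]
  simp only [Nat.cast_zero, zero_mul, add_zero]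
  rw [Finset.mul_sum]
  apply Finset.sum_congr rfl
  intro i hi
  simp only [Finset.mem_range] at hi
  rw [show n+1-(k+1+i) = (n-(k+1+i))+1 from by omega, pow_succ]
  ring

lemma binomTail_step (m : ℕ) (p : ℝ) :
    binomTail (2*m+3) (m+2) p
      = binomTail (2*m+1) (m+1) p
        + (((2*m+2).choose (m+1) : ℕ) : ℝ) * (p*(1-p))^(m+1) * (p - 1/2) := by
  have r1 : binomTail (2*m+3) (m+2) p
      = (1-p) * binomTail (2*m+2) (m+2) p + p * binomTail (2*m+2) (m+1) p := by
    have := binomTail_rec (2*m+2) (m+1) (by omega) p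
    convert this using 3 <;> omega
  have r2 : binomTail (2*m+2) (m+2) p
      = (1-p) * binomTail (2*m+1) (m+2) p + p * binomTail (2*m+1) (m+1) p := by
    have := binomTail_rec (2*m+1) (m+1) (by omega) p
    convert this using 3 <;> omega
  have r3 : binomTail (2*m+2) (m+1) p
      = (1-p) * binomTail (2*m+1) (m+1) p + p * binomTail (2*m+1) m p := by
    have := binomTail_rec (2*m+1) m (by omega) p
    convert this using 3 <;> omega
  have s1 : binomTail (2*m+1) (m+2) p
      = binomTail (2*m+1) (m+1) p - ((2*m+1).choose (m+1) : ℝ) * p ^ (m+1) * (1-p) ^ m := by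
    have := binomTail_succ_left (2*m+1) (m+1) (by omega) p
    rw [show 2*m+1-(m+1) = m from by omega] at this
    linarith
  have s2 : binomTail (2*m+1) m p
      = ((2*m+1).choose m : ℝ) * p ^ m * (1-p) ^ (m+1) + binomTail (2*m+1) (m+1) p := by
    have := binomTail_succ_left (2*m+1) m (by omega) p
    rw [show 2*m+1-m = m+1 from by omega] at this
    exact this
  have c1 : (2*m+1).choose m = (2*m+1).choose (m+1) := by
    rw [← Nat.choose_symm (show m+1 ≤ 2*m+1 from by omega),
      show 2*m+1-(m+1) = m from by omega]
  have c2 : (((2*m+2).choose (m+1) : ℕ) : ℝ) = 2 * ((2*m+1).choose (m+1) : ℝ) := by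
    rw [show 2*m+2 = (2*m+1)+1 from by omega, Nat.choose_succ_succ, c1]
    push_cast
    ring
  rw [r1, r2, r3, s1, s2, c1, c2, mul_pow]
  ring

lemma binomTail_main (m : ℕ) (p : ℝ) :
    binomTail (2*m+1) (m+1) p
      = p - (1 / 2 - p) * ∑ j ∈ Finset.Icc 1 m,
          (((2 * j).choose j : ℕ) : ℝ) * (p * (1 - p)) ^ j := by
  induction m with
  | zero => simp [binomTail]
  | succ m ih =>
    rw [show 2*(m+1)+1 = 2*m+3 from by omega, show m+1+1 = m+2 from rfl,
      binomTail_step m p, ih, Finset.sum_Icc_succ_top (by omega),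
      show 2*(m+1) = 2*m+2 from by omega]
    ring

theorem stmt1 (n : ℕ) (hn : Odd n) (p : ℝ) (hp0 : 0 ≤ p) (hp1 : p ≤ 1) :
    binomTail n ((n + 1) / 2) p
      = p - (1 / 2 - p) * ∑ j ∈ Finset.Icc 1 ((n - 1) / 2),
          (((2 * j).choose j : ℕ) : ℝ) * (p * (1 - p)) ^ j := by
  obtain ⟨m, rfl⟩ := hn
  rw [show (2*m+1+1)/2 = m+1 from by omega, show (2*m+1-1)/2 = m from by omega]
  exact binomTail_main m p
end

section
/- For even m, P[B(p,m) ≥ m/2] − P[B(p,m−1) ≥ (m−1)/2] = (1/2) C(m, m/2) (p(1−p))^{m/2}. -/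
open Real

open Finset in
lemma binomTail_aux (j : ℕ) (p : ℝ) :
    (∑ h ∈ Icc (j+1) (2*j+2), ((2*j+2).choose h : ℝ) * p ^ h * (1-p) ^ (2*j+2-h))
      = (∑ h ∈ Icc (j+1) (2*j+1), ((2*j+1).choose h : ℝ) * p ^ h * (1-p) ^ (2*j+1-h))
        + ((2*j+1).choose j : ℝ) * p ^ (j+1) * (1-p) ^ (j+1) := by
  set A := ∑ h ∈ Icc (j+1) (2*j+1), ((2*j+1).choose h : ℝ) * p ^ h * (1-p) ^ (2*j+1-h) with hA
  -- Step 1: split off top term of LHS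
  have h1 : (∑ h ∈ Icc (j+1) (2*j+2), ((2*j+2).choose h : ℝ) * p ^ h * (1-p) ^ (2*j+2-h))
      = (∑ h ∈ Icc (j+1) (2*j+1), ((2*j+2).choose h : ℝ) * p ^ h * (1-p) ^ (2*j+2-h))
        + p ^ (2*j+2) := by
    rw [Finset.sum_Icc_succ_top (by omega : j+1 ≤ 2*j+1+1)]
    simp [Nat.sub_self]
  -- Step 2: reindex
  have h2 : (∑ h ∈ Icc (j+1) (2*j+1), ((2*j+2).choose h : ℝ) * p ^ h * (1-p) ^ (2*j+2-h))
      = ∑ h ∈ Icc j (2*j), ((2*j+2).choose (h+1) : ℝ) * p ^ (h+1) * (1-p) ^ (2*j+1-h) := by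
    rw [show Icc (j+1) (2*j+1) = Finset.map (addRightEmbedding 1) (Icc j (2*j)) by
      rw [Finset.map_add_right_Icc], Finset.sum_map]
    apply Finset.sum_congr rfl
    intro h hh
    simp only [Finset.mem_Icc] at hh
    simp only [addRightEmbedding_apply]
    congr 2
    omega
  -- Step 3: Pascal and split into two sums
  have h3 : (∑ h ∈ Icc j (2*j), ((2*j+2).choose (h+1) : ℝ) * p ^ (h+1) * (1-p) ^ (2*j+1-h))
      = (∑ h ∈ Icc j (2*j), ((2*j+1).choose h : ℝ) * p ^ (h+1) * (1-p) ^ (2*j+1-h))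
        + (∑ h ∈ Icc j (2*j), ((2*j+1).choose (h+1) : ℝ) * p ^ (h+1) * (1-p) ^ (2*j+1-h)) := by
    rw [← Finset.sum_add_distrib]
    apply Finset.sum_congr rfl
    intro h hh
    have : (2*j+2).choose (h+1) = (2*j+1).choose h + (2*j+1).choose (h+1) :=
      Nat.choose_succ_succ (2*j+1) h
    rw [this]
    push_cast
    ring
  -- Step 4: second sum equals (1-p) * A
  have h4 : (∑ h ∈ Icc j (2*j), ((2*j+1).choose (h+1) : ℝ) * p ^ (h+1) * (1-p) ^ (2*j+1-h))
      = (1-p) * A := by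
    rw [hA, Finset.mul_sum]
    rw [show Icc (j+1) (2*j+1) = Finset.map (addRightEmbedding 1) (Icc j (2*j)) by
      rw [Finset.map_add_right_Icc], Finset.sum_map]
    apply Finset.sum_congr rfl
    intro h hh
    simp only [Finset.mem_Icc] at hh
    simp only [addRightEmbedding_apply]
    have : (2*j+1) - (h+1) = 2*j - h := by omega
    rw [this, show (2*j+1-h) = (2*j-h)+1 by omega, pow_succ]
    ring
  -- Step 5: first sum equals C(2j+1,j) p^{j+1} q^{j+1} + p*A - p^{2j+2}
  have h5 : (∑ h ∈ Icc j (2*j), ((2*j+1).choose h : ℝ) * p ^ (h+1) * (1-p) ^ (2*j+1-h))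
      = ((2*j+1).choose j : ℝ) * p ^ (j+1) * (1-p) ^ (j+1) + p * A - p ^ (2*j+2) := by
    have hins : Icc j (2*j) = insert j (Icc (j+1) (2*j)) := by
      ext x; simp only [Finset.mem_Icc, Finset.mem_insert]; omega
    rw [hins, Finset.sum_insert (by simp only [Finset.mem_Icc]; omega)]
    have hpa : p * A = (∑ h ∈ Icc (j+1) (2*j), ((2*j+1).choose h : ℝ) * p ^ (h+1) * (1-p) ^ (2*j+1-h))
        + p ^ (2*j+2) := by
      rw [hA, Finset.mul_sum, Finset.sum_Icc_succ_top (by omega : j+1 ≤ 2*j+1)]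
      congr 1
      · apply Finset.sum_congr rfl
        intro h hh
        rw [pow_succ]
        ring
      · simp [Nat.sub_self]
        ring
    rw [hpa]
    have : (2*j+1) - j = j+1 := by omega
    rw [this]
    ring
  rw [h1, h2, h3, h4, h5]
  ring

theorem stmt4 (m : ℕ) (hm : Even m) (hm0 : 0 < m) (p : ℝ) (hp0 : 0 ≤ p) (hp1 : p ≤ 1) :
    binomTail m (m / 2) p - binomTail (m - 1) (m / 2) p
      = (1 / 2) * (m.choose (m / 2) : ℝ) * (p * (1 - p)) ^ (m / 2) := by
  obtain ⟨j, rfl⟩ : ∃ j, m = 2*j+2 := by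
    obtain ⟨k, hk⟩ := hm
    exact ⟨k-1, by omega⟩
  have hm2 : (2*j+2)/2 = j+1 := by omega
  have hm1 : 2*j+2-1 = 2*j+1 := by omega
  rw [hm2, hm1]
  unfold binomTail
  have := binomTail_aux j p
  have hch : ((2*j+2).choose (j+1) : ℝ) = 2 * ((2*j+1).choose j : ℝ) := by
    have hnat : (2*j+2).choose (j+1) = 2 * (2*j+1).choose j := by
      have h1 : (2*j+2).choose (j+1) = (2*j+1).choose j + (2*j+1).choose (j+1) :=
        Nat.choose_succ_succ (2*j+1) j
      rw [h1, Nat.choose_symm_half]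
      omega
    exact_mod_cast congrArg (Nat.cast : ℕ → ℝ) hnat
  rw [this, hch, mul_pow]
  ring
end

section
/- For all integers j ≥ 1, 4^j · e^{l(2j)} / √(πj) < C(2j, j) < 4^j · e^{u(2j)} / √(πj), where l(n) = −(9n+1)/(3n(12n+1)) and u(n) = −(18n−1)/(12n(6n+1)). -/
open Real

noncomputable def l (x : ℝ) : ℝ := -(9 * x + 1) / (3 * x * (12 * x + 1))

noncomputable def u (x : ℝ) : ℝ := -(18 * x - 1) / (12 * x * (6 * x + 1))

open Filter Topology

lemma R1 {x : ℝ} (hx : 1 ≤ x) : 1 ≤ 8*x*(x+1)*(l (2*x+2) - l (2*x)) := by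
  have hx0 : (0:ℝ) < x := by linarith
  unfold l
  have d1 : (3*(2*x+2)*(12*(2*x+2)+1)) > 0 := by nlinarith
  have d2 : (3*(2*x)*(12*(2*x)+1)) > 0 := by nlinarith
  rw [div_sub_div _ _ (ne_of_gt d1) (ne_of_gt d2), ← mul_div_assoc, le_div_iff₀ (by positivity)]
  nlinarith [sq_nonneg x, sq_nonneg (x-1), mul_pos hx0 hx0, sq_nonneg (x*(x-1))]

lemma R2 {x : ℝ} (hx : 1 ≤ x) : 2*(2*x+1)^2*(u (2*x+2) - u (2*x)) ≤ 1 := by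
  have hx0 : (0:ℝ) < x := by linarith
  unfold u
  have d1 : (12*(2*x+2)*(6*(2*x+2)+1)) > 0 := by nlinarith
  have d2 : (12*(2*x)*(6*(2*x)+1)) > 0 := by nlinarith
  rw [div_sub_div _ _ (ne_of_gt d1) (ne_of_gt d2), ← mul_div_assoc, div_le_iff₀ (by positivity)]
  nlinarith [sq_nonneg x, sq_nonneg (x-1), mul_pos hx0 hx0, sq_nonneg (x*(x-1))]

lemma R4 {x : ℝ} (hx : 1 ≤ x) : 0 < u (2*x+2) - u (2*x) := by
  have hx0 : (0:ℝ) < x := by linarith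
  unfold u
  have d1 : (12*(2*x+2)*(6*(2*x+2)+1)) > 0 := by nlinarith
  have d2 : (12*(2*x)*(6*(2*x)+1)) > 0 := by nlinarith
  rw [div_sub_div _ _ (ne_of_gt d1) (ne_of_gt d2), lt_div_iff₀ (by positivity)]
  nlinarith [sq_nonneg x, sq_nonneg (x-1), mul_pos hx0 hx0]

lemma R5 {x : ℝ} (hx : 1 ≤ x) : 0 < l (2*x+2) - l (2*x) := by
  have h := R1 hx
  have hx0 : (0:ℝ) < x := by linarith
  by_contra hc
  push_neg at hc
  nlinarith [mul_nonpos_of_nonneg_of_nonpos (show (0:ℝ) ≤ 8*x*(x+1) by positivity) hc]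

lemma expEE_a {x : ℝ} (hx : 1 ≤ x) :
    4*x*(x+1)*(Real.exp (-u (2*x)))^2 < (2*x+1)^2*(Real.exp (-u (2*x+2)))^2 := by
  have hx0 : (0:ℝ) < x := by linarith
  have hx1 : (0:ℝ) < x+1 := by linarith
  set Δ : ℝ := u (2*x+2) - u (2*x) with hΔdef
  have hΔ : 0 < Δ := R4 hx
  have hR2 : 2*(2*x+1)^2*Δ ≤ 1 := by rw [hΔdef]; exact R2 hx
  have hsplit : (Real.exp (-u (2*x)))^2 = Real.exp (2*Δ) * (Real.exp (-u (2*x+2)))^2 := by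
    rw [sq, sq, ← Real.exp_add, ← Real.exp_add, ← Real.exp_add]
    congr 1
    rw [hΔdef]; ring
  have hlt : Real.exp (2*Δ) * (1 - 2*Δ) < 1 := by
    have h1 : -(2*Δ) + 1 < Real.exp (-(2*Δ)) := Real.add_one_lt_exp (by nlinarith)
    have h2 : Real.exp (-(2*Δ)) = 1 / Real.exp (2*Δ) := by
      rw [Real.exp_neg]; ring
    rw [h2, lt_div_iff₀ (Real.exp_pos _)] at h1
    nlinarith
  have hEpos := Real.exp_pos (2*Δ)
  have t1 : 4*x*(x+1) ≤ (2*x+1)^2*(1-2*Δ) := by nlinarith [hR2]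
  have t2 := mul_le_mul_of_nonneg_right t1 hEpos.le
  have t3 := mul_lt_mul_of_pos_left hlt (show (0:ℝ) < (2*x+1)^2 by positivity)
  have hmain : 4*x*(x+1)*Real.exp (2*Δ) < (2*x+1)^2 := by nlinarith [t2, t3]
  rw [hsplit]
  have hE'2 : (0:ℝ) < (Real.exp (-u (2*x+2)))^2 := by positivity
  nlinarith [mul_lt_mul_of_pos_right hmain hE'2]

lemma expEE_b {x : ℝ} (hx : 1 ≤ x) :
    (2*x+1)^2*(Real.exp (-l (2*x+2)))^2 < 4*x*(x+1)*(Real.exp (-l (2*x)))^2 := by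
  have hx0 : (0:ℝ) < x := by linarith
  have hx1 : (0:ℝ) < x+1 := by linarith
  set Δ : ℝ := l (2*x+2) - l (2*x) with hΔdef
  have hΔ : 0 < Δ := R5 hx
  have hR1 : 1 ≤ 8*x*(x+1)*Δ := by rw [hΔdef]; exact R1 hx
  have hsplit : (Real.exp (-l (2*x+2)))^2 = Real.exp (-(2*Δ)) * (Real.exp (-l (2*x)))^2 := by
    rw [sq, sq, ← Real.exp_add, ← Real.exp_add, ← Real.exp_add]
    congr 1
    rw [hΔdef]; ring
  have hgt : 1 + 2*Δ < Real.exp (2*Δ) := by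
    have := Real.add_one_lt_exp (show 2*Δ ≠ 0 by positivity) 
    linarith
  have h2 : Real.exp (-(2*Δ)) * (1 + 2*Δ) < 1 := by
    have hp := Real.exp_pos (2*Δ)
    have h3 : Real.exp (-(2*Δ)) = 1 / Real.exp (2*Δ) := by rw [Real.exp_neg]; ring
    rw [h3, div_mul_eq_mul_div, div_lt_one hp]
    linarith
  have h1 : (2*x+1)^2 ≤ 4*x*(x+1)*(1+2*Δ) := by nlinarith [hR1]
  have hEneg := Real.exp_pos (-(2*Δ))
  have hm : (2*x+1)^2 * Real.exp (-(2*Δ)) < 4*x*(x+1) := by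
    nlinarith [mul_le_mul_of_nonneg_right h1 hEneg.le, mul_lt_mul_of_pos_left h2 (show (0:ℝ) < 4*x*(x+1) by positivity)]
  rw [hsplit]
  have hE2 : (0:ℝ) < (Real.exp (-l (2*x)))^2 := by positivity
  nlinarith [mul_lt_mul_of_pos_right hm hE2]

lemma sq_step {x C C' E E' P : ℝ} (hx : 1 ≤ x) (hC : 0 < C) (hC' : 0 < C') (hP : 0 < P)
    (hE : 0 < E) (hE' : 0 < E')
    (hrec : C' * (x+1) = 2*(2*x+1)*C)
    (hEE : 4*x*(x+1)*E^2 < (2*x+1)^2*E'^2) :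
    C * Real.sqrt (π*x) / P * E < C' * Real.sqrt (π*(x+1)) / (4*P) * E' := by
  have hx0 : (0:ℝ) < x := by linarith
  have hx1 : (0:ℝ) < x + 1 := by linarith
  have hC'eq : C' = 2*(2*x+1)*C/(x+1) := by
    field_simp
    linarith [hrec]
  have hs1 : Real.sqrt (π*x) ^ 2 = π*x := Real.sq_sqrt (by positivity)
  have hs2 : Real.sqrt (π*(x+1)) ^ 2 = π*(x+1) := Real.sq_sqrt (by positivity)
  apply lt_of_pow_lt_pow_left₀ 2 (by positivity)
  rw [hC'eq]
  have expand1 : (C * Real.sqrt (π*x) / P * E)^2 = C^2 * (π*x) * E^2 / P^2 := by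
    rw [mul_pow, div_pow, mul_pow, hs1]; ring
  have expand2 : (2*(2*x+1)*C/(x+1) * Real.sqrt (π*(x+1)) / (4*P) * E')^2
      = (4*(2*x+1)^2*C^2*π*E'^2) / ((x+1)*(4*P)^2) := by
    rw [mul_pow, div_pow, mul_pow, hs2]
    field_simp
    ring
  rw [expand1, expand2]
  rw [div_lt_div_iff₀ (by positivity) (by positivity)]
  have hfin := mul_lt_mul_of_pos_left hEE (show (0:ℝ) < 4*π*C^2*P^2 by positivity)
  nlinarith [hfin]

lemma sq_step_b {x C C' E E' P : ℝ} (hx : 1 ≤ x) (hC : 0 < C) (hC' : 0 < C') (hP : 0 < P)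
    (hE : 0 < E) (hE' : 0 < E')
    (hrec : C' * (x+1) = 2*(2*x+1)*C)
    (hEE : (2*x+1)^2*E'^2 < 4*x*(x+1)*E^2) :
    C' * Real.sqrt (π*(x+1)) / (4*P) * E' < C * Real.sqrt (π*x) / P * E := by
  have hx0 : (0:ℝ) < x := by linarith
  have hx1 : (0:ℝ) < x + 1 := by linarith
  have hC'eq : C' = 2*(2*x+1)*C/(x+1) := by
    field_simp
    linarith [hrec]
  have hs1 : Real.sqrt (π*x) ^ 2 = π*x := Real.sq_sqrt (by positivity)
  have hs2 : Real.sqrt (π*(x+1)) ^ 2 = π*(x+1) := Real.sq_sqrt (by positivity)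
  apply lt_of_pow_lt_pow_left₀ 2 (by positivity)
  rw [hC'eq]
  have expand1 : (C * Real.sqrt (π*x) / P * E)^2 = C^2 * (π*x) * E^2 / P^2 := by
    rw [mul_pow, div_pow, mul_pow, hs1]; ring
  have expand2 : (2*(2*x+1)*C/(x+1) * Real.sqrt (π*(x+1)) / (4*P) * E')^2
      = (4*(2*x+1)^2*C^2*π*E'^2) / ((x+1)*(4*P)^2) := by
    rw [mul_pow, div_pow, mul_pow, hs2]
    field_simp
    ring
  rw [expand1, expand2]
  rw [div_lt_div_iff₀ (by positivity) (by positivity)]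
  have hfin := mul_lt_mul_of_pos_left hEE (show (0:ℝ) < 4*π*C^2*P^2 by positivity)
  nlinarith [hfin]

noncomputable def cb (j : ℕ) : ℝ := ((2*j).choose j : ℝ) * Real.sqrt (π * j) / 4 ^ j

lemma choose_pos' (j : ℕ) : (0:ℝ) < ((2*j).choose j : ℝ) := by
  exact_mod_cast Nat.choose_pos (by omega)

lemma choose_rec (j : ℕ) : ((2*(j+1)).choose (j+1) : ℝ) * ((j:ℝ)+1) =
    2*(2*(j:ℝ)+1) * ((2*j).choose j : ℝ) := by
  have h := Nat.succ_mul_centralBinom_succ j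
  unfold Nat.centralBinom at h
  have h2 : (((j+1) * ((2*(j+1)).choose (j+1)) : ℕ) : ℝ) = ((2 * (2*j+1) * ((2*j).choose j) : ℕ) : ℝ) := by
    exact_mod_cast congrArg (Nat.cast (R := ℝ)) h
  push_cast at h2
  linarith

lemma cb_succ (j : ℕ) : cb (j+1) =
    ((2*(j+1)).choose (j+1) : ℝ) * Real.sqrt (π*((j:ℝ)+1)) / (4*4^j) := by
  unfold cb
  push_cast
  rw [pow_succ]
  ring

noncomputable def aS (j : ℕ) : ℝ := cb j * Real.exp (-u (2*j))
noncomputable def bS (j : ℕ) : ℝ := cb j * Real.exp (-l (2*j))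

lemma step_a {j : ℕ} (hj : 1 ≤ j) : aS j < aS (j+1) := by
  have hx : (1:ℝ) ≤ (j:ℝ) := by exact_mod_cast hj
  unfold aS
  rw [cb_succ]
  have harg : 2*((j:ℕ):ℝ) + 2 = 2*(((j+1):ℕ):ℝ) := by push_cast; ring
  unfold cb
  have h := sq_step (C := ((2*j).choose j : ℝ)) (C' := ((2*(j+1)).choose (j+1) : ℝ))
      (P := (4:ℝ)^j) hx (choose_pos' j) (choose_pos' (j+1)) (by positivity)
      (Real.exp_pos _) (Real.exp_pos _) (choose_rec j) (expEE_a hx)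
  rw [harg] at h
  convert h using 3

lemma step_b {j : ℕ} (hj : 1 ≤ j) : bS (j+1) < bS j := by
  have hx : (1:ℝ) ≤ (j:ℝ) := by exact_mod_cast hj
  unfold bS
  rw [cb_succ]
  have harg : 2*((j:ℕ):ℝ) + 2 = 2*(((j+1):ℕ):ℝ) := by push_cast; ring
  unfold cb
  have h := sq_step_b (C := ((2*j).choose j : ℝ)) (C' := ((2*(j+1)).choose (j+1) : ℝ))
      (P := (4:ℝ)^j) hx (choose_pos' j) (choose_pos' (j+1)) (by positivity)
      (Real.exp_pos _) (Real.exp_pos _) (choose_rec j) (expEE_b hx)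
  rw [harg] at h
  convert h using 3

lemma cb_pos {j : ℕ} (hj : 1 ≤ j) : 0 < cb j := by
  unfold cb
  have h1 := choose_pos' j
  have h2 : (0:ℝ) < (j:ℝ) := by exact_mod_cast hj
  have hπ : (0:ℝ) < π * j := by positivity
  positivity

lemma stirling_pos {n : ℕ} (hn : 1 ≤ n) : 0 < Stirling.stirlingSeq n := by
  obtain ⟨m, rfl⟩ : ∃ m, n = m + 1 := ⟨n - 1, by omega⟩
  exact Stirling.stirlingSeq'_pos m

lemma cb_eq {j : ℕ} (hj : 1 ≤ j) :
    cb j = Real.sqrt π * Stirling.stirlingSeq (2*j) / (Stirling.stirlingSeq j)^2 := by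
  have hj0 : (0:ℝ) < (j:ℝ) := by exact_mod_cast hj
  have hfacpos : (0:ℝ) < (Nat.factorial j : ℝ) := by exact_mod_cast j.factorial_pos
  have hG : (0:ℝ) < ((j:ℝ)/Real.exp 1)^(2*j) := by positivity
  have hCpos := choose_pos' j
  have hfac : ((Nat.factorial (2*j) : ℕ) : ℝ) = ((2*j).choose j : ℝ) * (Nat.factorial j : ℝ) * (Nat.factorial j : ℝ) := by
    have h := Nat.choose_mul_factorial_mul_factorial (show j ≤ 2*j by omega)
    have h2 : 2*j - j = j := by omega
    rw [h2] at h
    exact_mod_cast congrArg (Nat.cast (R:=ℝ)) h.symm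
  have hspos : 0 < Stirling.stirlingSeq j := stirling_pos hj
  have hs2pos : 0 < Stirling.stirlingSeq (2*j) := stirling_pos (by omega)
  have hLpos : 0 < cb j := cb_pos hj
  have hRpos : 0 < Real.sqrt π * Stirling.stirlingSeq (2*j) / (Stirling.stirlingSeq j)^2 := by
    have : (0:ℝ) < Real.sqrt π := Real.sqrt_pos.2 pi_pos
    positivity
  rw [← Real.sqrt_sq hLpos.le, ← Real.sqrt_sq hRpos.le]
  congr 1
  have e1 : (Stirling.stirlingSeq j)^2 = (Nat.factorial j : ℝ)^2 / (2*(j:ℝ) * ((j:ℝ)/Real.exp 1)^(2*j)) := by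
    unfold Stirling.stirlingSeq
    rw [div_pow, mul_pow, Real.sq_sqrt (by positivity), ← pow_mul, mul_comm (j:ℕ) 2]
  have e2 : (Stirling.stirlingSeq (2*j))^2
      = ((Nat.factorial (2*j) : ℕ) : ℝ)^2 / ((4*(j:ℝ)) * (((2:ℝ)^(2*j))^2 * (((j:ℝ)/Real.exp 1)^(2*j))^2)) := by
    unfold Stirling.stirlingSeq
    rw [div_pow, mul_pow, Real.sq_sqrt (by positivity)]
    have harg : (((2*j : ℕ)):ℝ)/Real.exp 1 = 2*((j:ℝ)/Real.exp 1) := by push_cast; ring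
    rw [harg, mul_pow]
    push_cast
    ring
  have h4 : (4:ℝ)^j = 2^(2*j) := by
    rw [pow_mul]; norm_num
  rw [div_pow, mul_pow, Real.sq_sqrt pi_pos.le, e1, e2]
  unfold cb
  rw [div_pow, mul_pow, Real.sq_sqrt (by positivity : (0:ℝ) ≤ π * j), hfac, h4]
  have h2pow : (0:ℝ) < (2:ℝ)^(2*j) := by positivity
  field_simp
  ring

lemma tendsto_cb : Tendsto cb atTop (𝓝 1) := by
  have h1 := Stirling.tendsto_stirlingSeq_sqrt_pi
  have h2 : Tendsto (fun j : ℕ => Stirling.stirlingSeq (2*j)) atTop (𝓝 (Real.sqrt π)) :=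
    h1.comp (Filter.tendsto_atTop_mono (fun n => by simp only [id_eq]; omega) Filter.tendsto_id)
  have h3 : Tendsto (fun j : ℕ => Real.sqrt π * Stirling.stirlingSeq (2*j) /
      (Stirling.stirlingSeq j)^2) atTop (𝓝 (Real.sqrt π * Real.sqrt π / (Real.sqrt π)^2)) :=
    (tendsto_const_nhds.mul h2).div (h1.pow 2)
      (by positivity)
  have heq : Real.sqrt π * Real.sqrt π / (Real.sqrt π)^2 = 1 := by
    have : (0:ℝ) < Real.sqrt π := Real.sqrt_pos.2 pi_pos
    rw [sq]
    field_simp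
  rw [heq] at h3
  apply h3.congr'
  filter_upwards [eventually_ge_atTop 1] with j hj
  exact (cb_eq hj).symm

lemma u_bounds {x : ℝ} (hx : 1 ≤ x) : -(1/x) ≤ u (2*x) ∧ u (2*x) ≤ 0 := by
  have hx0 : (0:ℝ) < x := by linarith
  unfold u
  have hD : (0:ℝ) < 12*(2*x)*(6*(2*x)+1) := by nlinarith
  have hN : (0:ℝ) ≤ 18*(2*x)-1 := by linarith
  constructor
  · rw [neg_div, neg_le_neg_iff, div_le_div_iff₀ hD hx0]
    nlinarith
  · exact div_nonpos_of_nonpos_of_nonneg (by linarith) hD.le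

lemma l_bounds {x : ℝ} (hx : 1 ≤ x) : -(1/x) ≤ l (2*x) ∧ l (2*x) ≤ 0 := by
  have hx0 : (0:ℝ) < x := by linarith
  unfold l
  have hD : (0:ℝ) < 3*(2*x)*(12*(2*x)+1) := by nlinarith
  have hN : (0:ℝ) ≤ 9*(2*x)+1 := by linarith
  constructor
  · rw [neg_div, neg_le_neg_iff, div_le_div_iff₀ hD hx0]
    nlinarith
  · exact div_nonpos_of_nonpos_of_nonneg (by linarith) hD.le

lemma tendsto_negone_div : Tendsto (fun j : ℕ => -(1/(j:ℝ))) atTop (𝓝 0) := by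
  have := (tendsto_one_div_atTop_nhds_zero_nat (𝕜 := ℝ)).neg
  simpa using this

lemma tendsto_u0 : Tendsto (fun j : ℕ => u (2*(j:ℝ))) atTop (𝓝 0) := by
  apply tendsto_of_tendsto_of_tendsto_of_le_of_le' tendsto_negone_div tendsto_const_nhds
  · filter_upwards [eventually_ge_atTop 1] with j hj
    exact (u_bounds (by exact_mod_cast hj)).1
  · filter_upwards [eventually_ge_atTop 1] with j hj
    exact (u_bounds (by exact_mod_cast hj)).2

lemma tendsto_l0 : Tendsto (fun j : ℕ => l (2*(j:ℝ))) atTop (𝓝 0) := by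
  apply tendsto_of_tendsto_of_tendsto_of_le_of_le' tendsto_negone_div tendsto_const_nhds
  · filter_upwards [eventually_ge_atTop 1] with j hj
    exact (l_bounds (by exact_mod_cast hj)).1
  · filter_upwards [eventually_ge_atTop 1] with j hj
    exact (l_bounds (by exact_mod_cast hj)).2

lemma tendsto_aS : Tendsto aS atTop (𝓝 1) := by
  have h1 : Tendsto (fun j : ℕ => -u (2*(j:ℝ))) atTop (𝓝 0) := by
    simpa using tendsto_u0.neg
  have h2 : Tendsto (fun j : ℕ => Real.exp (-u (2*(j:ℝ)))) atTop (𝓝 (Real.exp 0)) :=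
    (Real.continuous_exp.tendsto 0).comp h1
  rw [Real.exp_zero] at h2
  have h3 := tendsto_cb.mul h2
  rw [mul_one] at h3
  exact h3

lemma tendsto_bS : Tendsto bS atTop (𝓝 1) := by
  have h1 : Tendsto (fun j : ℕ => -l (2*(j:ℝ))) atTop (𝓝 0) := by
    simpa using tendsto_l0.neg
  have h2 : Tendsto (fun j : ℕ => Real.exp (-l (2*(j:ℝ)))) atTop (𝓝 (Real.exp 0)) :=
    (Real.continuous_exp.tendsto 0).comp h1
  rw [Real.exp_zero] at h2
  have h3 := tendsto_cb.mul h2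
  rw [mul_one] at h3
  exact h3

lemma aS_mono : ∀ n m : ℕ, 1 ≤ n → n ≤ m → aS n ≤ aS m := by
  intro n m h1 h2
  induction m, h2 using Nat.le_induction with
  | base => exact le_refl _
  | succ m hm ih => exact ih.trans (step_a (by omega)).le

lemma bS_anti : ∀ n m : ℕ, 1 ≤ n → n ≤ m → bS m ≤ bS n := by
  intro n m h1 h2
  induction m, h2 using Nat.le_induction with
  | base => exact le_refl _
  | succ m hm ih => exact (step_b (by omega)).le.trans ih

lemma aS_lt_one {j : ℕ} (hj : 1 ≤ j) : aS j < 1 := by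
  have h2 : aS (j+1) ≤ 1 := by
    apply ge_of_tendsto tendsto_aS
    filter_upwards [eventually_ge_atTop (j+1)] with m hm
    exact aS_mono (j+1) m (by omega) hm
  exact (step_a hj).trans_le h2

lemma bS_gt_one {j : ℕ} (hj : 1 ≤ j) : 1 < bS j := by
  have h2 : 1 ≤ bS (j+1) := by
    apply le_of_tendsto tendsto_bS
    filter_upwards [eventually_ge_atTop (j+1)] with m hm
    exact bS_anti (j+1) m (by omega) hm
  exact h2.trans_lt (step_b hj)

theorem stmt5 (j : ℕ) (hj : 1 ≤ j) :
    4 ^ j * Real.exp (l (2 * j)) / Real.sqrt (π * j) < (((2 * j).choose j : ℕ) : ℝ) ∧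
    (((2 * j).choose j : ℕ) : ℝ) < 4 ^ j * Real.exp (u (2 * j)) / Real.sqrt (π * j) := by
  have hx : (1:ℝ) ≤ (j:ℝ) := by exact_mod_cast hj
  have hx0 : (0:ℝ) < (j:ℝ) := by linarith
  have hsq : 0 < Real.sqrt (π * j) := Real.sqrt_pos.2 (by positivity)
  have h4 : (0:ℝ) < 4^j := by positivity
  have hcb4 : (4:ℝ)^j * cb j = ((2*j).choose j : ℝ) * Real.sqrt (π * j) := by
    unfold cb
    field_simp
  have ha : cb j * Real.exp (-u (2*(j:ℝ))) < 1 := aS_lt_one hj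
  have hb : 1 < cb j * Real.exp (-l (2*(j:ℝ))) := bS_gt_one hj
  -- exp l < cb j
  have hexpl : Real.exp (l (2*(j:ℝ))) < cb j := by
    have h := mul_lt_mul_of_pos_right hb (Real.exp_pos (l (2*(j:ℝ))))
    rw [mul_assoc, ← Real.exp_add, neg_add_cancel, Real.exp_zero, mul_one, one_mul] at h
    exact h
  have hexpu : cb j < Real.exp (u (2*(j:ℝ))) := by
    have h := mul_lt_mul_of_pos_right ha (Real.exp_pos (u (2*(j:ℝ))))
    rw [mul_assoc, ← Real.exp_add, neg_add_cancel, Real.exp_zero, mul_one, one_mul] at h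
    exact h
  constructor
  · rw [div_lt_iff₀ hsq]
    have := mul_lt_mul_of_pos_left hexpl h4
    rw [hcb4] at this
    linarith
  · rw [lt_div_iff₀ hsq]
    have := mul_lt_mul_of_pos_left hexpu h4
    rw [hcb4] at this
    linarith
end

section
/- For odd n and p ∈ (0, 1/2), P[B(p,n) ≥ n/2] ≤ (2σ)^{n+1} / ((1−2p)√(2π(n+1))), with σ = √(p(1−p)). -/
open Real

lemma central_binom_sq_le (m : ℕ) : (((2 * m).choose m : ℝ)) ^ 2 * (π * m) ≤ 16 ^ m := by
  have h1 := Real.Wallis.le_W m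
  rw [Real.Wallis.W_eq_factorial_ratio] at h1
  have hF : (0 : ℝ) < (m.factorial : ℝ) := by exact_mod_cast m.factorial_pos
  have hG : (0 : ℝ) < ((2 * m).factorial : ℝ) := by exact_mod_cast (2 * m).factorial_pos
  have hC : ((2 * m).choose m : ℝ) * ((m.factorial : ℝ) * (m.factorial : ℝ))
      = ((2 * m).factorial : ℝ) := by
    have h := Nat.choose_mul_factorial_mul_factorial (show m ≤ 2 * m by omega)
    rw [show 2 * m - m = m from by omega] at h
    push_cast [← h]; ring
  rw [div_mul_div_comm, div_le_div_iff₀ (by positivity) (by positivity)] at h1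
  have hGC : ((2 * m).factorial : ℝ) ^ 2
      = ((2 * m).choose m : ℝ) ^ 2 * (m.factorial : ℝ) ^ 4 := by
    rw [← hC]; ring
  have step1 : π * ((2 * m).factorial : ℝ) ^ 2 * ((m : ℝ) * ((2 * (m:ℝ) + 2) * 2))
      ≤ π * ((2 * m).factorial : ℝ) ^ 2 * ((2 * (m:ℝ) + 1) * (2 * (m:ℝ) + 1)) := by
    apply mul_le_mul_of_nonneg_left _ (by positivity)
    nlinarith [Nat.cast_nonneg (α := ℝ) m]
  have hB : (0:ℝ) < (m.factorial : ℝ) ^ 4 * ((2 * (m:ℝ) + 2) * 2) := by positivity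
  have h16 : (16 : ℝ) ^ m = 2 ^ (4 * m) := by rw [pow_mul]; norm_num
  rw [h16, ← mul_le_mul_iff_of_pos_right hB]
  calc ((2 * m).choose m : ℝ) ^ 2 * (π * m) * ((m.factorial : ℝ) ^ 4 * ((2 * (m:ℝ) + 2) * 2))
      = π * ((2 * m).factorial : ℝ) ^ 2 * ((m : ℝ) * ((2 * (m:ℝ) + 2) * 2)) := by
        rw [hGC]; ring
    _ ≤ π * ((2 * m).factorial : ℝ) ^ 2 * ((2 * (m:ℝ) + 1) * (2 * (m:ℝ) + 1)) := step1
    _ = (2 * (m:ℝ) + 1) * π * (((2 * m).factorial : ℝ) ^ 2 * (2 * (m:ℝ) + 1)) := by ring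
    _ ≤ 2 ^ (4 * m) * (m.factorial : ℝ) ^ 4 * ((2 * (m:ℝ) + 2) * 2) := h1
    _ = 2 ^ (4 * m) * ((m.factorial : ℝ) ^ 4 * ((2 * (m:ℝ) + 2) * 2)) := by ring

theorem stmt9 (n : ℕ) (hn : Odd n) (p : ℝ) (hp0 : 0 < p) (hp : p < 1 / 2) :
    binomTail n ((n + 1) / 2) p
      ≤ (2 * Real.sqrt (p * (1 - p))) ^ (n + 1)
          / ((1 - 2 * p) * Real.sqrt (2 * π * (n + 1))) := by
  obtain ⟨k, hk⟩ := hn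
  set m : ℕ := k + 1 with hm
  have hnm : n = 2 * m - 1 := by omega
  have hn1 : n + 1 = 2 * m := by omega
  have hdiv : (n + 1) / 2 = m := by omega
  set q : ℝ := 1 - p with hqdef
  have hq0 : 0 < q := by simp only [hqdef]; linarith
  have hpq : p < q := by simp only [hqdef]; linarith
  have hd : 0 < 1 - 2 * p := by linarith
  set r : ℝ := p / q with hrdef
  have hr0 : 0 ≤ r := le_of_lt (div_pos hp0 hq0)
  have hr1 : r < 1 := (div_lt_one hq0).mpr hpq
  set C : ℝ := (n.choose m : ℝ) with hCdef
  -- termwise bound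
  have hterm : ∀ h ∈ Finset.Icc m n,
      (n.choose h : ℝ) * p ^ h * q ^ (n - h) ≤ C * (p ^ m * q ^ k) * r ^ (h - m) := by
    intro h hh
    rw [Finset.mem_Icc] at hh
    have hch : (n.choose h : ℝ) ≤ C := by
      have h1 := Nat.choose_le_middle h n
      have h2 : n.choose (n / 2) = n.choose m := by
        rw [show n / 2 = n - m from by omega, Nat.choose_symm (by omega)]
      rw [h2] at h1
      rw [hCdef]
      exact_mod_cast h1
    have heq : p ^ h * q ^ (n - h) = (p ^ m * q ^ k) * r ^ (h - m) := by
      have e1 : p ^ h = p ^ m * p ^ (h - m) := by rw [← pow_add]; congr 1; omega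
      have e2 : q ^ k = q ^ (n - h) * q ^ (h - m) := by rw [← pow_add]; congr 1; omega
      rw [e1, e2, hrdef, div_pow]
      field_simp
    calc (n.choose h : ℝ) * p ^ h * q ^ (n - h)
        = (n.choose h : ℝ) * (p ^ h * q ^ (n - h)) := by ring
      _ ≤ C * (p ^ h * q ^ (n - h)) := by
          apply mul_le_mul_of_nonneg_right hch
          positivity
      _ = C * (p ^ m * q ^ k) * r ^ (h - m) := by rw [heq]; ring
  have hC0 : 0 ≤ C := by positivity
  have hfac0 : 0 ≤ C * (p ^ m * q ^ k) := by positivity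
  -- sum bound
  have hsum : binomTail n ((n + 1) / 2) p ≤ C * (p ^ m * q ^ k) * (1 / (1 - r)) := by
    rw [hdiv]
    calc binomTail n m p ≤ ∑ h ∈ Finset.Icc m n, C * (p ^ m * q ^ k) * r ^ (h - m) :=
          Finset.sum_le_sum hterm
      _ = C * (p ^ m * q ^ k) * ∑ h ∈ Finset.Icc m n, r ^ (h - m) := by
          rw [Finset.mul_sum]
      _ ≤ C * (p ^ m * q ^ k) * (1 / (1 - r)) := by
          apply mul_le_mul_of_nonneg_left _ hfac0
          have hre : ∑ h ∈ Finset.Icc m n, r ^ (h - m)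
              = ∑ j ∈ Finset.range (n + 1 - m), r ^ j := by
            apply Finset.sum_nbij' (fun h => h - m) (fun j => j + m)
            · intro a ha; rw [Finset.mem_Icc] at ha; rw [Finset.mem_range]; omega
            · intro a ha; rw [Finset.mem_range] at ha; rw [Finset.mem_Icc]; omega
            · intro a ha; rw [Finset.mem_Icc] at ha; omega
            · intro a _; omega
            · intro a _; rfl
          rw [hre, le_div_iff₀ (by linarith)]
          have hgs := geom_sum_mul r (n + 1 - m)
          nlinarith [pow_nonneg hr0 (n + 1 - m)]
  have hone : 1 / (1 - r) = q / (1 - 2 * p) := by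
    rw [hrdef, hqdef]
    rw [show 1 - p / (1 - p) = (1 - 2 * p) / (1 - p) from by
      rw [eq_div_iff (show (1:ℝ) - p ≠ 0 by linarith), sub_mul,
        div_mul_cancel₀ _ (show (1:ℝ) - p ≠ 0 by linarith)]; ring, one_div_div]
  have hmid : C * (p ^ m * q ^ k) * (1 / (1 - r)) = C * (p * q) ^ m / (1 - 2 * p) := by
    rw [hone, mul_pow, show m = k + 1 from hm, pow_succ p, pow_succ q]
    field_simp
  -- central binomial bound
  have hcb : 2 * C * Real.sqrt (π * m) ≤ 4 ^ m := by
    have hCC : 2 * C = ((2 * m).choose m : ℝ) := by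
      have hsym : (2 * k + 1).choose k = (2 * k + 1).choose (k + 1) := by
        have h := Nat.choose_symm (show k + 1 ≤ 2 * k + 1 by omega)
        rw [show 2 * k + 1 - (k + 1) = k from by omega] at h
        exact h
      have : (2 * m).choose m = 2 * n.choose m := by
        rw [show 2 * m = (2 * k + 1) + 1 from by omega, show m = k + 1 from hm,
          Nat.choose_succ_succ, hsym, show n = 2 * k + 1 from by omega]
        ring
      rw [hCdef]
      exact_mod_cast this.symm
    have hA := central_binom_sq_le m
    rw [← hCC] at hA
    have hs : Real.sqrt (π * m) ^ 2 = π * m := Real.sq_sqrt (by positivity)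
    have h44 : (4 : ℝ) ^ m * 4 ^ m = 16 ^ m := by rw [← mul_pow]; norm_num
    nlinarith [sq_nonneg (2 * C * Real.sqrt (π * m) - 4 ^ m),
      pow_pos (show (0:ℝ) < 4 by norm_num) m, Real.sqrt_nonneg (π * m),
      mul_nonneg (mul_nonneg (by linarith : (0:ℝ) ≤ 2 * C) (Real.sqrt_nonneg (π * m)))
        (le_of_lt (pow_pos (show (0:ℝ) < 4 by norm_num) m))]
  -- rewrite RHS
  have hrhs : (2 * Real.sqrt (p * q)) ^ (n + 1) / ((1 - 2 * p) * Real.sqrt (2 * π * (n + 1)))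
      = 4 ^ m * (p * q) ^ m / ((1 - 2 * p) * (2 * Real.sqrt (π * m))) := by
    have e1 : (2 * Real.sqrt (p * q)) ^ (n + 1) = 4 ^ m * (p * q) ^ m := by
      rw [hn1, mul_pow, pow_mul, pow_mul, Real.sq_sqrt (by positivity)]
      norm_num
    have e2 : Real.sqrt (2 * π * (n + 1)) = 2 * Real.sqrt (π * m) := by
      have : 2 * π * ((n : ℝ) + 1) = 4 * (π * m) := by
        have : ((n : ℝ) + 1) = 2 * m := by exact_mod_cast congrArg Nat.cast hn1
        rw [this]; ring
      rw [this, show (4 : ℝ) = 2 ^ 2 from by norm_num, Real.sqrt_mul (by positivity),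
        Real.sqrt_sq (by norm_num : (0:ℝ) ≤ 2)]
    rw [e1, e2]
  -- final comparison
  have hx : (0 : ℝ) < (p * q) ^ m := by positivity
  have hs0 : 0 < Real.sqrt (π * m) := Real.sqrt_pos.mpr (by positivity)
  have hfin : C * (p * q) ^ m / (1 - 2 * p)
      ≤ 4 ^ m * (p * q) ^ m / ((1 - 2 * p) * (2 * Real.sqrt (π * m))) := by
    rw [div_le_div_iff₀ (by positivity) (by positivity)]
    have := mul_le_mul_of_nonneg_right hcb (le_of_lt (mul_pos hx hd))
    nlinarith
  calc binomTail n ((n + 1) / 2) p ≤ C * (p ^ m * q ^ k) * (1 / (1 - r)) := hsum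
    _ = C * (p * q) ^ m / (1 - 2 * p) := hmid
    _ ≤ 4 ^ m * (p * q) ^ m / ((1 - 2 * p) * (2 * Real.sqrt (π * m))) := hfin
    _ = (2 * Real.sqrt (p * q)) ^ (n + 1) / ((1 - 2 * p) * Real.sqrt (2 * π * (n + 1))) :=
        hrhs.symm
end

section
/- For odd n and p ∈ [0, 1/2), P[B(p,n) ≥ n/2] ≥ (1−2p) e^{l(n+1)} (2σ)^{n+1} / ((1 − 4σ²√((n+1)/(n+3))) √(2π(n+1))), where σ = √(p(1−p)) and l(n) = −(9n+1)/(3n(12n+1)). -/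
open Real

/-! ### Auxiliary development -/

noncomputable def wf (m : ℕ) (p : ℝ) (j : ℕ) : ℝ :=
  ((2 * m - 1).choose (m + j) : ℝ) * p ^ (m + j) * (1 - p) ^ (2 * m - 1 - (m + j))

noncomputable def df (m : ℕ) (p : ℝ) (j : ℕ) : ℝ :=
  p * wf m p j - (1 - p) * wf m p (j + 1)

section Comb

variable {m : ℕ} {p : ℝ}

lemma wf_zero (hm : 1 ≤ m) (j : ℕ) (hj : m ≤ j) : wf m p j = 0 := by
  have : 2 * m - 1 < m + j := by omega
  simp [wf, Nat.choose_eq_zero_of_lt this]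

lemma wf_nonneg (hp0 : 0 ≤ p) (hp : p < 1 / 2) (j : ℕ) : 0 ≤ wf m p j := by
  have h1 : (0:ℝ) ≤ 1 - p := by linarith
  unfold wf
  positivity

lemma wf_pos (hm : 1 ≤ m) (hp0 : 0 < p) (hp : p < 1 / 2) (j : ℕ) (hj : j ≤ m - 1) :
    0 < wf m p j := by
  have h1 : (0:ℝ) < 1 - p := by linarith
  have hc : 0 < (2 * m - 1).choose (m + j) := Nat.choose_pos (by omega)
  have h2 : (0:ℝ) < ((2 * m - 1).choose (m + j) : ℝ) := by exact_mod_cast hc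
  unfold wf
  positivity

/-- recurrence: `(m+j+1) q w_{j+1} = (m-1-j) p w_j` -/
lemma wf_rec (hm : 1 ≤ m) (hp0 : 0 ≤ p) (j : ℕ) :
    ((m : ℝ) + j + 1) * (1 - p) * wf m p (j + 1) = ((m - 1 - j : ℕ) : ℝ) * p * wf m p j := by
  by_cases hj : j + 2 ≤ m
  · have hc := Nat.choose_succ_right_eq (2 * m - 1) (m + j)
    have h1 : 2 * m - 1 - (m + j) = m - 1 - j := by omega
    rw [h1] at hc
    have hcR : ((2 * m - 1).choose (m + j + 1) : ℝ) * ((m : ℝ) + j + 1)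
        = ((2 * m - 1).choose (m + j) : ℝ) * ((m - 1 - j : ℕ) : ℝ) := by
      exact_mod_cast congrArg (fun t : ℕ => (t : ℝ)) hc
    unfold wf
    have hmj : m + (j + 1) = (m + j) + 1 := by omega
    have he : 2 * m - 1 - (m + j) = (2 * m - 1 - ((m + j) + 1)) + 1 := by omega
    rw [hmj, pow_succ p (m + j), he, pow_succ (1 - p)]
    linear_combination (p ^ (m + j) * p * (1 - p) ^ (2 * m - 1 - (m + j + 1)) * (1 - p)) * hcR
  · have h0 : (m - 1 - j : ℕ) = 0 := by omega
    have hw : wf m p (j + 1) = 0 := wf_zero hm _ (by omega)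
    rw [h0, hw]
    simp

/-- `(m+j+1) δ_j = (2j+2) p w_j` -/
lemma df_eq (hm : 1 ≤ m) (hp0 : 0 ≤ p) (j : ℕ) :
    ((m : ℝ) + j + 1) * df m p j = (2 * j + 2) * p * wf m p j := by
  by_cases hj : m ≤ j
  · have h1 : wf m p j = 0 := wf_zero hm _ hj
    have h2 : wf m p (j + 1) = 0 := wf_zero hm _ (by omega)
    simp [df, h1, h2]
  · have hrec := wf_rec hm hp0 j
    have hcast : ((m - 1 - j : ℕ) : ℝ) = (m : ℝ) - 1 - j := by
      have : (m - 1 - j : ℕ) = m - (1 + j) := by omega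
      rw [this, Nat.cast_sub (by omega)]
      push_cast
      ring
    rw [hcast] at hrec
    unfold df
    linear_combination -hrec

end Comb

set_option maxHeartbeats 1000000 in
/-- core combinatorial bound -/
lemma key_comb (m : ℕ) (hm : 1 ≤ m) (p : ℝ) (hp0 : 0 < p) (hp : p < 1 / 2) :
    (∑ j ∈ Finset.range m, wf m p j) *
        (1 - 4 * (p * (1 - p)) * Real.sqrt ((m : ℝ) / ((m : ℝ) + 1)))
      ≥ (1 - 2 * p) * ((2 * m - 1).choose m : ℝ) * (p * (1 - p)) ^ m := by
  have hm1 : (1:ℝ) ≤ (m:ℝ) := by exact_mod_cast hm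
  set b : ℝ := Real.sqrt ((m : ℝ) / ((m : ℝ) + 1)) with hbdef
  have hb0 : 0 ≤ b := Real.sqrt_nonneg _
  have hb1' :1 ≤ (1 - b) * (2 * ((m:ℝ) + 1)) := by
    have key : ((m:ℝ) / ((m:ℝ) + 1)) ≤ ((2*(m:ℝ)+1) / (2*(m:ℝ)+2))^2 := by
      rw [div_pow, div_le_div_iff₀ (by positivity) (by positivity)]
      nlinarith
    have h2 : b ≤ (2*(m:ℝ)+1) / (2*(m:ℝ)+2) := by
      rw [hbdef]
      calc Real.sqrt ((m : ℝ) / ((m : ℝ) + 1)) ≤ Real.sqrt (((2*(m:ℝ)+1) / (2*(m:ℝ)+2))^2) :=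
            Real.sqrt_le_sqrt key
        _ = (2*(m:ℝ)+1) / (2*(m:ℝ)+2) := Real.sqrt_sq (by positivity)
    have h3 : ((2*(m:ℝ)+1) / (2*(m:ℝ)+2)) * (2 * ((m:ℝ) + 1)) = 2*(m:ℝ)+1 := by
      rw [show (2:ℝ) * ((m:ℝ) + 1) = 2*(m:ℝ)+2 by ring]
      exact div_mul_cancel₀ _ (by positivity)
    nlinarith
  obtain ⟨T, hT⟩ : ∃ x : ℝ, x = ∑ j ∈ Finset.range m, wf m p j := ⟨_, rfl⟩
  obtain ⟨S, hS⟩ : ∃ x : ℝ, x = ∑ j ∈ Finset.range m, df m p j := ⟨_, rfl⟩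
  rw [← hT]
  have hwm : wf m p m = 0 := wf_zero hm m le_rfl
  have hdm : df m p m = 0 := by
    simp [df, wf_zero hm m le_rfl, wf_zero hm (m+1) (by omega)]
  have hshift : ∑ j ∈ Finset.range m, wf m p (j+1) = T - wf m p 0 := by
    have h1 := Finset.sum_range_succ' (wf m p) m
    have h2 := Finset.sum_range_succ (wf m p) m
    rw [hwm, add_zero] at h2
    rw [h2] at h1
    rw [hT]
    linear_combination -h1
  have hdshift : ∑ j ∈ Finset.range m, df m p (j+1) = S - df m p 0 := by
    have h1 := Finset.sum_range_succ' (df m p) m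
    have h2 := Finset.sum_range_succ (df m p) m
    rw [hdm, add_zero] at h2
    rw [h2] at h1
    rw [hS]
    linear_combination -h1
  have hS' : S = p * T - (1-p) * (T - wf m p 0) := by
    rw [hS]
    have : ∀ j, df m p j = p * wf m p j - (1-p) * wf m p (j+1) := fun j => rfl
    calc ∑ j ∈ Finset.range m, df m p j
        = ∑ j ∈ Finset.range m, (p * wf m p j - (1-p) * wf m p (j+1)) := by
          exact Finset.sum_congr rfl fun j _ => this j
      _ = p * T - (1-p) * (T - wf m p 0) := by
          rw [Finset.sum_sub_distrib, ← Finset.mul_sum, ← Finset.mul_sum, hshift, ← hT]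
  -- head bound
  have hw0 : 0 ≤ wf m p 0 := wf_nonneg hp0.le hp 0
  have e0 := df_eq hm hp0.le 0
  have head : (1-p) * df m p 0 ≤ 4*p*(1-p)*(1-b) * wf m p 0 := by
    have hA : 0 ≤ p * (1-p) * wf m p 0 * ((1 - b) * (2*((m:ℝ)+1)) - 1) := by
      have h5 : (0:ℝ) ≤ (1 - b) * (2*((m:ℝ)+1)) - 1 := by linarith
      have hpq : (0:ℝ) ≤ p * (1-p) * wf m p 0 := by
        have : (0:ℝ) < 1 - p := by linarith
        positivity
      exact mul_nonneg hpq h5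
    have hdf0 : df m p 0 = 2*p*wf m p 0 / ((m:ℝ)+1) := by
      rw [eq_div_iff (by positivity)]
      push_cast at e0
      linarith [e0]
    have hrw : (1-p) * df m p 0 = (2*p*(1-p)*wf m p 0) / ((m:ℝ)+1) := by
      rw [hdf0]
      ring
    rw [hrw, div_le_iff₀ (by positivity)]
    nlinarith [hA]
  -- termwise bound
  have TC : ∀ j ∈ Finset.range m,
      (1-p) * df m p (j+1) - p * df m p j ≤ 4*p*(1-p)*(1-b) * wf m p (j+1) := by
    intro j hj
    have hjm : j < m := Finset.mem_range.mp hj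
    have hq0 : (0:ℝ) < 1 - p := by linarith
    by_cases hje : j + 2 ≤ m
    · have hjR : (j:ℝ) + 2 ≤ (m:ℝ) := by exact_mod_cast hje
      have hj0 : (0:ℝ) ≤ (j:ℝ) := Nat.cast_nonneg j
      have e1 := df_eq hm hp0.le (j+1)
      have e2 := df_eq hm hp0.le j
      have e3 := wf_rec hm hp0.le j
      have hcast : ((m - 1 - j : ℕ) : ℝ) = (m:ℝ) - 1 - j := by
        have h : (m - 1 - j : ℕ) = m - (1 + j) := by omega
        rw [h, Nat.cast_sub (by omega)]
        push_cast
        ring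
      rw [hcast] at e3
      have hW : 0 < wf m p (j+1) := wf_pos hm hp0 hp (j+1) (by omega)
      have hV : 0 < wf m p j := wf_pos hm hp0 hp j (by omega)
      have hden1 : (0:ℝ) < (m:ℝ) + (j:ℝ) + 2 := by linarith
      have hden2 : (0:ℝ) < (m:ℝ) - 1 - (j:ℝ) := by linarith
      have hd1 : df m p (j+1) = (2*(j:ℝ)+4)*p*wf m p (j+1) / ((m:ℝ)+(j:ℝ)+2) := by
        rw [eq_div_iff (ne_of_gt hden1)]
        push_cast at e1
        linarith [e1]
      have hd2 : p * df m p j = (2*(j:ℝ)+2)*p*(1-p)*wf m p (j+1) / ((m:ℝ)-1-(j:ℝ)) := by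
        rw [eq_div_iff (ne_of_gt hden2)]
        have hpV : ((m:ℝ) - 1 - j) * (p * wf m p j) = ((m:ℝ)+(j:ℝ)+1) * ((1-p) * wf m p (j+1)) := by
          linarith [e3]
        have e2' : ((m:ℝ) + (j:ℝ) + 1) * df m p j = (2*(j:ℝ)+2) * p * wf m p j := by
          push_cast at e2
          linarith [e2]
        have hden3 : (0:ℝ) < (m:ℝ) + (j:ℝ) + 1 := by linarith
        -- p * df j * (m-1-j) * (m+j+1) = (2j+2) * p * (p wf j) * (m-1-j) ... 
        have h4 : ((m:ℝ)+(j:ℝ)+1) * (p * df m p j * ((m:ℝ)-1-(j:ℝ)))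
            = ((m:ℝ)+(j:ℝ)+1) * ((2*(j:ℝ)+2)*p*(1-p)*wf m p (j+1)) := by
          calc ((m:ℝ)+(j:ℝ)+1) * (p * df m p j * ((m:ℝ)-1-(j:ℝ)))
              = (((m:ℝ)+(j:ℝ)+1) * df m p j) * (p * ((m:ℝ)-1-(j:ℝ))) := by ring
            _ = ((2*(j:ℝ)+2) * p * wf m p j) * (p * ((m:ℝ)-1-(j:ℝ))) := by rw [e2']
            _ = (2*(j:ℝ)+2) * p * (((m:ℝ) - 1 - (j:ℝ)) * (p * wf m p j)) := by ring
            _ = (2*(j:ℝ)+2) * p * (((m:ℝ)+(j:ℝ)+1) * ((1-p) * wf m p (j+1))) := by rw [hpV]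
            _ = ((m:ℝ)+(j:ℝ)+1) * ((2*(j:ℝ)+2)*p*(1-p)*wf m p (j+1)) := by ring
        have := mul_left_cancel₀ (ne_of_gt hden3) h4
        linarith [this]
      have key : (2*(j:ℝ)+4)/((m:ℝ)+(j:ℝ)+2) - (2*(j:ℝ)+2)/((m:ℝ)-1-(j:ℝ)) ≤ 4*(1-b) := by
        have h2 : (2*(j:ℝ)+4)/((m:ℝ)+(j:ℝ)+2) - (2*(j:ℝ)+2)/((m:ℝ)-1-(j:ℝ)) ≤ 2/((m:ℝ)+1) := by
          rw [div_sub_div _ _ (ne_of_gt hden1) (ne_of_gt hden2),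
            div_le_div_iff₀ (by positivity) (by positivity)]
          nlinarith [mul_nonneg hj0 hj0, mul_nonneg (mul_nonneg hj0 hj0) hj0,
            mul_nonneg (sub_nonneg.mpr hjR) hj0,
            mul_nonneg (mul_nonneg (sub_nonneg.mpr hjR) hj0) hj0]
        have h3 : 2/((m:ℝ)+1) ≤ 4*(1-b) := by
          rw [div_le_iff₀ (by positivity)]
          nlinarith
        linarith
      have hfact : (1-p) * df m p (j+1) - p * df m p j
          = p*(1-p)*wf m p (j+1) * ((2*(j:ℝ)+4)/((m:ℝ)+(j:ℝ)+2) - (2*(j:ℝ)+2)/((m:ℝ)-1-(j:ℝ))) := by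
        rw [hd1, hd2]
        field_simp
      rw [hfact]
      calc p*(1-p)*wf m p (j+1) * ((2*(j:ℝ)+4)/((m:ℝ)+(j:ℝ)+2) - (2*(j:ℝ)+2)/((m:ℝ)-1-(j:ℝ)))
          ≤ p*(1-p)*wf m p (j+1) * (4*(1-b)) := by
            apply mul_le_mul_of_nonneg_left key (by positivity)
        _ = 4*p*(1-p)*(1-b) * wf m p (j+1) := by ring
    · -- j = m - 1
      have hw1 : wf m p (j+1) = 0 := wf_zero hm _ (by omega)
      have hd1 : df m p (j+1) = 0 := by
        simp [df, wf_zero hm (j+1) (by omega), wf_zero hm (j+2) (by omega)]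
      have e2 := df_eq hm hp0.le j
      have hwj : 0 ≤ wf m p j := wf_nonneg hp0.le hp j
      have hdj : 0 ≤ df m p j := by
        have h6 : (0:ℝ) ≤ (2*(j:ℝ)+2)*p*wf m p j := by positivity
        have h7 : (0:ℝ) < (m:ℝ)+(j:ℝ)+1 := by positivity
        push_cast at e2
        nlinarith [e2, h6, h7]
      rw [hw1, hd1]
      have : (0:ℝ) ≤ p * df m p j := mul_nonneg hp0.le hdj
      linarith
  have sumTC := Finset.sum_le_sum TC
  have hsum2 : ∑ j ∈ Finset.range m, 4*p*(1-p)*(1-b) * wf m p (j+1)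
      = 4*p*(1-p)*(1-b) * (T - wf m p 0) := by
    rw [← Finset.mul_sum, hshift]
  have hsum1 : ∑ j ∈ Finset.range m, ((1-p) * df m p (j+1) - p * df m p j)
      = (1-p) * (S - df m p 0) - p * S := by
    rw [Finset.sum_sub_distrib, ← Finset.mul_sum, ← Finset.mul_sum, hdshift, ← hS]
  -- combine
  have hq0 : (0:ℝ) < 1 - p := by linarith
  have hA : (1-2*p) * S ≤ 4*p*(1-p)*(1-b) * T := by
    have := sumTC
    rw [hsum1, hsum2] at this
    linarith
  have hB : (1-2*p)*((1-p) * wf m p 0) = (1-2*p)^2*T + (1-2*p)*S := by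
    linear_combination (2*p-1) * hS'
  have final : (1-2*p)^2*T + 4*(p*(1-p))*(1-b)*T ≥ (1-2*p)*(1-p)*wf m p 0 := by
    nlinarith [hA, hB]
  have hw0eq : (1 - 2 * p) * ((2 * m - 1).choose m : ℝ) * (p * (1 - p)) ^ m
      = (1-2*p)*(1-p)*wf m p 0 := by
    unfold wf
    rw [show m + 0 = m from rfl, show 2*m-1-m = m-1 by omega, mul_pow]
    have hqm : (1-p)^m = (1-p)^(m-1) * (1-p) := by
      rw [← pow_succ]
      congr 1
      omega
    rw [hqm]
    ring
  have ident : 1 - 4*(p*(1-p))*b = (1-2*p)^2 + 4*(p*(1-p))*(1-b) := by ring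
  rw [ge_iff_le, hw0eq, ident]
  nlinarith [final]

open Filter Topology Stirling in
lemma l_diff (x : ℝ) (hx : 1 ≤ x) : 1 / (8*x*(x+1)) ≤ l (2*x+2) - l (2*x) := by
  have h0 : (0:ℝ) < x := by linarith
  have h1 : x ≠ 0 := ne_of_gt h0
  have h2 : x + 1 ≠ 0 := by positivity
  have h3 : (24*x+1 : ℝ) ≠ 0 := by positivity
  have h4 : (24*x+25 : ℝ) ≠ 0 := by positivity
  have key : l (2*x+2) - l (2*x) - 1/(8*x*(x+1))
      = (48*x+25)/(24*x*(x+1)*(24*x+1)*(24*x+25)) := by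
    unfold l
    field_simp
    ring
  have hpos : (0:ℝ) < (48*x+25)/(24*x*(x+1)*(24*x+1)*(24*x+25)) := by positivity
  linarith

noncomputable def vseq (m : ℕ) : ℝ :=
  (Nat.centralBinom m : ℝ) * Real.sqrt m * Real.exp (-(l (2 * (m:ℝ)))) / 4 ^ m

open Filter Topology Stirling in
lemma vseq_step (m : ℕ) (hm : 1 ≤ m) : vseq (m+1) ≤ vseq m := by
  have hx : (1:ℝ) ≤ (m:ℝ) := by exact_mod_cast hm
  have hx0 : (0:ℝ) < (m:ℝ) := by linarith
  set x : ℝ := (m:ℝ) with hxdef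
  have hΔ := l_diff x hx
  have hexp : 1 + 1/(8*x*(x+1)) ≤ Real.exp (l (2*x+2) - l (2*x)) :=
    le_trans (by linarith) (Real.add_one_le_exp _)
  have hcB : (0:ℝ) < (Nat.centralBinom m : ℝ) := by exact_mod_cast Nat.centralBinom_pos m
  have hrec : ((m:ℝ)+1) * (Nat.centralBinom (m+1) : ℝ) = 2*(2*x+1) * (Nat.centralBinom m : ℝ) := by
    have h0 := Nat.succ_mul_centralBinom_succ m
    rw [hxdef]
    exact_mod_cast h0
  have hc : (1:ℝ) + 1/(8*x*(x+1)) > 0 := by positivity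
  have hsq : (2*x+1) * Real.sqrt (x+1) ≤ 2*(x+1)*Real.sqrt x * (1 + 1/(8*x*(x+1))) := by
    have hL : (0:ℝ) ≤ (2*x+1) * Real.sqrt (x+1) := by positivity
    have hR : (0:ℝ) ≤ 2*(x+1)*Real.sqrt x * (1 + 1/(8*x*(x+1))) := by positivity
    have hsx : Real.sqrt x ^ 2 = x := Real.sq_sqrt hx0.le
    have hsx1 : Real.sqrt (x+1) ^ 2 = x + 1 := Real.sq_sqrt (by positivity)
    have hsqr : ((2*x+1) * Real.sqrt (x+1))^2 ≤ (2*(x+1)*Real.sqrt x * (1 + 1/(8*x*(x+1))))^2 := by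
      rw [mul_pow, mul_pow, mul_pow, hsx, hsx1]
      rw [show (1 + 1/(8*x*(x+1)))^2 = 1 + 1/(4*x*(x+1)) + 1/(64*x^2*(x+1)^2) by
        field_simp
        ring]
      have e1 : (2*(x+1))^2 * x * (1 + 1/(4*x*(x+1))) = 4*(x+1)^2*x + (x+1) := by
        field_simp
        ring
      have e2 : (0:ℝ) ≤ (2*(x+1))^2 * x * (1/(64*x^2*(x+1)^2)) := by positivity
      nlinarith [e1, e2]
    exact le_of_pow_le_pow_left₀ two_ne_zero hR hsqr
  -- relation between exponentials
  have hE : Real.exp (-(l (2*x))) = Real.exp (-(l (2*x+2))) * Real.exp (l (2*x+2) - l (2*x)) := by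
    rw [← Real.exp_add]
    congr 1
    ring
  have hE2 : Real.exp (-(l (2*x+2))) * (1 + 1/(8*x*(x+1))) ≤ Real.exp (-(l (2*x))) := by
    rw [hE]
    exact mul_le_mul_of_nonneg_left hexp (Real.exp_pos _).le
  -- main chain
  have hmain : (Nat.centralBinom (m+1) : ℝ) * Real.sqrt (x+1) * Real.exp (-(l (2*x+2)))
      ≤ 4 * ((Nat.centralBinom m : ℝ) * Real.sqrt x * Real.exp (-(l (2*x)))) := by
    have hx1 : (0:ℝ) < x + 1 := by linarith
    have hcB1 : (Nat.centralBinom (m+1) : ℝ) = 2*(2*x+1) * (Nat.centralBinom m : ℝ) / (x+1) := by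
      rw [eq_div_iff (ne_of_gt hx1)]
      linarith [hrec]
    rw [hcB1]
    have step1 : 2*(2*x+1) * (Nat.centralBinom m : ℝ) / (x+1) * Real.sqrt (x+1) * Real.exp (-(l (2*x+2)))
        = (2*(Nat.centralBinom m : ℝ)/(x+1)) * ((2*x+1) * Real.sqrt (x+1) * Real.exp (-(l (2*x+2)))) := by
      ring
    rw [step1]
    have step2 : (2*x+1) * Real.sqrt (x+1) * Real.exp (-(l (2*x+2)))
        ≤ 2*(x+1)*Real.sqrt x * (Real.exp (-(l (2*x+2))) * (1 + 1/(8*x*(x+1)))) := by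
      calc (2*x+1) * Real.sqrt (x+1) * Real.exp (-(l (2*x+2)))
          ≤ (2*(x+1)*Real.sqrt x * (1 + 1/(8*x*(x+1)))) * Real.exp (-(l (2*x+2))) :=
            mul_le_mul_of_nonneg_right hsq (Real.exp_pos _).le
        _ = 2*(x+1)*Real.sqrt x * (Real.exp (-(l (2*x+2))) * (1 + 1/(8*x*(x+1)))) := by ring
    have step3 : 2*(x+1)*Real.sqrt x * (Real.exp (-(l (2*x+2))) * (1 + 1/(8*x*(x+1))))
        ≤ 2*(x+1)*Real.sqrt x * Real.exp (-(l (2*x))) :=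
      mul_le_mul_of_nonneg_left hE2 (by positivity)
    have hfac : (0:ℝ) ≤ 2*(Nat.centralBinom m : ℝ)/(x+1) := by positivity
    calc (2*(Nat.centralBinom m : ℝ)/(x+1)) * ((2*x+1) * Real.sqrt (x+1) * Real.exp (-(l (2*x+2))))
        ≤ (2*(Nat.centralBinom m : ℝ)/(x+1)) * (2*(x+1)*Real.sqrt x * Real.exp (-(l (2*x)))) :=
          mul_le_mul_of_nonneg_left (le_trans step2 step3) hfac
      _ = (4 * ((Nat.centralBinom m : ℝ) * Real.sqrt x * Real.exp (-(l (2*x))))) * ((x+1) / (x+1)) := by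
          ring
      _ = 4 * ((Nat.centralBinom m : ℝ) * Real.sqrt x * Real.exp (-(l (2*x)))) := by
          rw [div_self (ne_of_gt hx1), mul_one]
  unfold vseq
  rw [← hxdef]
  have hcast1 : ((m+1 : ℕ) : ℝ) = x + 1 := by rw [hxdef]; push_cast; ring
  rw [hcast1, show (2*(x+1) : ℝ) = 2*x+2 from by ring]
  rw [div_le_div_iff₀ (by positivity) (by positivity)]
  have h4 : (4:ℝ)^(m+1) = 4^m * 4 := by rw [pow_succ]
  rw [h4]
  have h4m : (0:ℝ) ≤ 4^m := by positivity
  nlinarith [hmain, mul_le_mul_of_nonneg_right hmain h4m]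

open Filter Topology Stirling in
lemma vseq_eq (m : ℕ) (hm : 1 ≤ m) :
    vseq m = stirlingSeq (2*m) / (stirlingSeq m)^2 * Real.exp (-(l (2 * (m:ℝ)))) := by
  have hx0 : (0:ℝ) < (m:ℝ) := by exact_mod_cast hm
  have hF : (0:ℝ) < (Nat.factorial m : ℝ) := by exact_mod_cast Nat.factorial_pos m
  have he : (0:ℝ) < Real.exp 1 := Real.exp_pos 1
  have hcB : (Nat.centralBinom m : ℝ) * ((Nat.factorial m : ℝ) * (Nat.factorial m : ℝ))
      = (Nat.factorial (2*m) : ℝ) := by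
    have h := Nat.choose_mul_factorial_mul_factorial (show m ≤ 2*m by omega)
    rw [show 2*m - m = m by omega] at h
    have h' : (((2*m).choose m : ℕ) : ℝ) * (Nat.factorial m : ℝ) * (Nat.factorial m : ℝ)
        = (Nat.factorial (2*m) : ℝ) := by exact_mod_cast h
    rw [Nat.centralBinom]
    linear_combination h'
  have key : (Nat.centralBinom m : ℝ) * Real.sqrt m / 4 ^ m = stirlingSeq (2*m) / (stirlingSeq m)^2 := by
    unfold stirlingSeq
    have hc2 : ((2*m : ℕ):ℝ) = 2*(m:ℝ) := by push_cast; ring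
    rw [hc2]
    have hu2 : Real.sqrt (m:ℝ) ^ 2 = (m:ℝ) := Real.sq_sqrt hx0.le
    have h2sq : Real.sqrt 2 ^ 2 = 2 := Real.sq_sqrt (by norm_num)
    have hs2x : Real.sqrt (2*(m:ℝ)) = Real.sqrt 2 * Real.sqrt m := Real.sqrt_mul (by norm_num) _
    have hs4x : Real.sqrt (2*(2*(m:ℝ))) = 2 * Real.sqrt m := by
      rw [show 2*(2*(m:ℝ)) = 4*(m:ℝ) by ring, Real.sqrt_mul (by norm_num) _,
        show (4:ℝ) = 2^2 by norm_num, Real.sqrt_sq (by norm_num)]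
    have hpow : ((2*(m:ℝ))/Real.exp 1)^(2*m) = 4^m * (((m:ℝ)/Real.exp 1)^m)^2 := by
      rw [show ((2*(m:ℝ))/Real.exp 1) = 2*((m:ℝ)/Real.exp 1) by ring, mul_pow,
        show (2:ℝ)^(2*m) = 4^m by rw [pow_mul]; norm_num, pow_mul]
      ring
    rw [hs2x, hs4x, hpow]
    have hsm : Real.sqrt (m:ℝ) ≠ 0 := by positivity
    have hs2 : Real.sqrt 2 ≠ 0 := by positivity
    have hpm : ((m:ℝ)/Real.exp 1)^m ≠ 0 := by positivity
    have h4m : (4:ℝ)^m ≠ 0 := by positivity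
    field_simp
    linear_combination 2 * hcB - (Nat.factorial (2*m) : ℝ) * h2sq
  unfold vseq
  rw [← key]
  ring

open Filter Topology Stirling in
lemma vseq_ge (m : ℕ) (hm : 1 ≤ m) : 1 / Real.sqrt π ≤ vseq m := by
  have hanti : ∀ k : ℕ, vseq (k+1+1) ≤ vseq (k+1) := fun k => vseq_step (k+1) (by omega)
  have hA : Antitone (fun k : ℕ => vseq (k+1)) := antitone_nat_of_succ_le hanti
  -- the limit
  have h2k : Tendsto (fun k : ℕ => 2*(k+1)) atTop atTop :=
    tendsto_atTop_mono (fun k => by simp only [id_eq]; omega) tendsto_id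
  have hs2 : Tendsto (fun k : ℕ => stirlingSeq (2*(k+1))) atTop (𝓝 (Real.sqrt π)) :=
    tendsto_stirlingSeq_sqrt_pi.comp h2k
  have hs1 : Tendsto (fun k : ℕ => stirlingSeq (k+1)) atTop (𝓝 (Real.sqrt π)) :=
    tendsto_stirlingSeq_sqrt_pi.comp (tendsto_add_atTop_nat 1)
  have hl0 : Tendsto (fun k : ℕ => -(l (2 * (((k+1) : ℕ):ℝ)))) atTop (𝓝 0) := by
    apply squeeze_zero (g := fun k : ℕ => 1/((k:ℝ)+1))
    · intro k
      have hk1 : (1:ℝ) ≤ ((k+1 : ℕ):ℝ) := by exact_mod_cast Nat.le_add_left 1 k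
      set y : ℝ := ((k+1 : ℕ):ℝ)
      have hy0 : (0:ℝ) < y := by linarith
      unfold l
      rw [neg_div, neg_neg]
      positivity
    · intro k
      have hk1 : (1:ℝ) ≤ ((k+1 : ℕ):ℝ) := by exact_mod_cast Nat.le_add_left 1 k
      have hcast : ((k+1 : ℕ):ℝ) = (k:ℝ)+1 := by push_cast; ring
      rw [hcast] at hk1 ⊢
      set y : ℝ := (k:ℝ)+1
      have hy0 : (0:ℝ) < y := by linarith
      unfold l
      rw [neg_div, neg_neg, div_le_div_iff₀ (by nlinarith) (by positivity)]
      nlinarith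
    · exact tendsto_one_div_add_atTop_nhds_zero_nat
  have hexp : Tendsto (fun k : ℕ => Real.exp (-(l (2 * (((k+1) : ℕ):ℝ))))) atTop (𝓝 1) := by
    have := (Real.continuous_exp.tendsto 0).comp hl0
    simpa [Function.comp_def] using this
  have hpi : Real.sqrt π ≠ 0 := by positivity
  have hpisq : (Real.sqrt π)^2 ≠ 0 := pow_ne_zero 2 hpi
  have hcombined : Tendsto (fun k : ℕ =>
      stirlingSeq (2*(k+1)) / (stirlingSeq (k+1))^2 * Real.exp (-(l (2 * (((k+1) : ℕ):ℝ)))))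
      atTop (𝓝 (Real.sqrt π / (Real.sqrt π)^2 * 1)) :=
    Tendsto.mul (Tendsto.div hs2 (hs1.pow 2) hpisq) hexp
  have hval : Real.sqrt π / (Real.sqrt π)^2 * 1 = 1 / Real.sqrt π := by
    rw [mul_one, sq]
    rw [div_eq_div_iff (by positivity) (by positivity)]
    ring
  rw [hval] at hcombined
  have hlim : Tendsto (fun k : ℕ => vseq (k+1)) atTop (𝓝 (1 / Real.sqrt π)) :=
    hcombined.congr fun k => (vseq_eq (k+1) (by omega)).symm
  have hfin := hA.le_of_tendsto hlim (m-1)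
  rw [show m-1+1 = m by omega] at hfin
  exact hfin

/-- Robbins-type bound on the central binomial coefficient. -/
lemma key_stirling (m : ℕ) (hm : 1 ≤ m) :
    Real.exp (l (2 * (m : ℝ))) * 4 ^ m ≤ (Nat.centralBinom m : ℝ) * (Real.sqrt π * Real.sqrt m) := by
  have h := vseq_ge m hm
  unfold vseq at h
  have h4 : (0:ℝ) < 4^m := by positivity
  have hπ : (0:ℝ) < Real.sqrt π := Real.sqrt_pos.mpr pi_pos
  have hE : (0:ℝ) < Real.exp (l (2*(m:ℝ))) := Real.exp_pos _
  rw [le_div_iff₀ h4, Real.exp_neg] at h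
  have h2 := mul_le_mul_of_nonneg_right h (le_of_lt (mul_pos hπ hE))
  calc Real.exp (l (2*(m:ℝ))) * 4^m
      = 1 / Real.sqrt π * 4^m * (Real.sqrt π * Real.exp (l (2*(m:ℝ)))) := by
        field_simp
    _ ≤ (Nat.centralBinom m : ℝ) * Real.sqrt (m:ℝ) * (Real.exp (l (2*(m:ℝ))))⁻¹
          * (Real.sqrt π * Real.exp (l (2*(m:ℝ)))) := h2
    _ = (Nat.centralBinom m : ℝ) * (Real.sqrt π * Real.sqrt (m:ℝ)) := by
        field_simp

theorem stmt10 (n : ℕ) (hn : Odd n) (p : ℝ) (hp0 : 0 ≤ p) (hp : p < 1 / 2) :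
    binomTail n ((n + 1) / 2) p
      ≥ (1 - 2 * p) * Real.exp (l (n + 1)) * (2 * Real.sqrt (p * (1 - p))) ^ (n + 1)
          / ((1 - 4 * (p * (1 - p)) * Real.sqrt (((n : ℝ) + 1) / ((n : ℝ) + 3)))
              * Real.sqrt (2 * π * (n + 1))) := by
  obtain ⟨k, hk⟩ := hn
  set m := k + 1 with hmdef
  have hn2 : n = 2*m - 1 := by omega
  have hm : 1 ≤ m := by omega
  have hidx : (n+1)/2 = m := by omega
  have hcastn : (n:ℝ) + 1 = 2*(m:ℝ) := by
    rw [hk, hmdef]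
    push_cast
    ring
  rcases eq_or_lt_of_le hp0 with hp0' | hp0''
  · -- p = 0
    have hnum : (1 - 2*p) * Real.exp (l ((n:ℝ)+1)) * (2*Real.sqrt (p*(1-p)))^(n+1) = 0 := by
      rw [← hp0', show (0:ℝ)*(1-0) = 0 by ring, Real.sqrt_zero, mul_zero,
        zero_pow (by omega : n+1 ≠ 0), mul_zero]
    rw [ge_iff_le, hnum, zero_div]
    unfold binomTail
    apply Finset.sum_nonneg
    intro h hh
    have h1 : (0:ℝ) ≤ p := hp0
    have h2 : (0:ℝ) ≤ 1 - p := by linarith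
    positivity
  · have hq0 : (0:ℝ) < 1 - p := by linarith
    have hbt : binomTail n m p = ∑ j ∈ Finset.range m, wf m p j := by
      unfold binomTail wf
      rw [hn2, ← Finset.Ico_add_one_right_eq_Icc, Finset.sum_Ico_eq_sum_range,
        show 2*m-1+1-m = m by omega]
    have hsq : Real.sqrt (((n:ℝ)+1)/((n:ℝ)+3)) = Real.sqrt ((m:ℝ)/((m:ℝ)+1)) := by
      congr 1
      rw [hk, hmdef]
      push_cast
      rw [div_eq_div_iff (by positivity) (by positivity)]
      ring
    have hb1 : Real.sqrt ((m:ℝ)/((m:ℝ)+1)) ≤ 1 := by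
      rw [show √((m:ℝ)/((m:ℝ)+1)) ≤ 1 ↔ (m:ℝ)/((m:ℝ)+1) ≤ 1 from Real.sqrt_le_one]
      rw [div_le_one (by positivity)]
      linarith
    have hb0 : 0 ≤ Real.sqrt ((m:ℝ)/((m:ℝ)+1)) := Real.sqrt_nonneg _
    have h4pq : 4*(p*(1-p)) < 1 := by nlinarith
    have hD : 0 < 1 - 4*(p*(1-p)) * Real.sqrt ((m:ℝ)/((m:ℝ)+1)) := by
      nlinarith [mul_le_mul_of_nonneg_left hb1 (show (0:ℝ) ≤ 4*(p*(1-p)) by positivity)]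
    have hSpos : 0 < Real.sqrt (2*π*((n:ℝ)+1)) := Real.sqrt_pos.mpr (by positivity)
    rw [ge_iff_le, hsq, hidx, hbt, div_le_iff₀ (mul_pos hD hSpos)]
    have hKC := key_comb m hm p hp0'' hp
    have hn1 : n + 1 = 2*m := by omega
    have hsq2 : (2*Real.sqrt (p*(1-p)))^2 = 4*(p*(1-p)) := by
      rw [mul_pow, Real.sq_sqrt (by positivity)]
      ring
    have hpowA : (2*Real.sqrt (p*(1-p)))^(n+1) = 4^m * (p*(1-p))^m := by
      rw [hn1, pow_mul, hsq2, mul_pow]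
    have hln : l ((n:ℝ)+1) = l (2*(m:ℝ)) := by rw [hcastn]
    have hSval : Real.sqrt (2*π*((n:ℝ)+1)) = 2*(Real.sqrt π * Real.sqrt (m:ℝ)) := by
      rw [show 2*π*((n:ℝ)+1) = (2:ℝ)^2*(π*(m:ℝ)) by rw [hcastn]; ring,
        Real.sqrt_mul (by positivity), Real.sqrt_sq (by norm_num),
        Real.sqrt_mul pi_pos.le]
    have hCB : (Nat.centralBinom m : ℝ) = 2 * ((2*m-1).choose m : ℝ) := by
      have hNat : Nat.centralBinom (k+1) = 2 * ((2*(k+1)-1).choose (k+1)) := by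
        rw [Nat.centralBinom, show 2*(k+1)-1 = 2*k+1 by omega, show 2*(k+1) = (2*k+1)+1 by omega,
          Nat.choose_succ_succ, Nat.choose_symm_half]
        omega
      rw [hmdef]
      exact_mod_cast hNat
    have hKS := key_stirling m hm
    calc (1-2*p) * Real.exp (l ((n:ℝ)+1)) * (2*Real.sqrt (p*(1-p)))^(n+1)
        = (1-2*p) * (p*(1-p))^m * (Real.exp (l (2*(m:ℝ))) * 4^m) := by
          rw [hpowA, hln]
          ring
      _ ≤ (1-2*p) * (p*(1-p))^m * ((Nat.centralBinom m : ℝ) * (Real.sqrt π * Real.sqrt (m:ℝ))) := by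
          exact mul_le_mul_of_nonneg_left hKS
            (mul_nonneg (by linarith) (by positivity))
      _ = ((1-2*p) * ((2*m-1).choose m : ℝ) * (p*(1-p))^m) * (2*(Real.sqrt π * Real.sqrt (m:ℝ))) := by
          rw [hCB]
          ring
      _ ≤ ((∑ j ∈ Finset.range m, wf m p j) *
            (1 - 4*(p*(1-p)) * Real.sqrt ((m:ℝ)/((m:ℝ)+1)))) * (2*(Real.sqrt π * Real.sqrt (m:ℝ))) := by
          apply mul_le_mul_of_nonneg_right hKC (by positivity)
      _ = (∑ j ∈ Finset.range m, wf m p j) *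
            ((1 - 4*(p*(1-p)) * Real.sqrt ((m:ℝ)/((m:ℝ)+1))) * Real.sqrt (2*π*((n:ℝ)+1))) := by
          rw [hSval]
          ring
end

section
/- For positive integers η, k with 2η ≤ k, define ψ_η(k) = Σ_{j=η}^{k−η} 1/√(j(k−j)). Then ψ_η(k) ≤ π. -/
open Real

private lemma aux_calc (s k : ℝ) (hs : s ≠ 0) (hk : k ≠ 0) :
    1 / s = 1 / (2 * s / k) * (2 / k) := by
  field_simp

private lemma gr_deriv (k : ℝ) (hk : 0 < k) (x : ℝ) (hx : 0 < x) (hxk : x < k) :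
    HasDerivAt (fun x : ℝ => Real.arcsin ((2 * x - k) / k))
      (1 / Real.sqrt (x * (k - x))) x := by
  have hy1 : (2 * x - k) / k ≠ -1 := by
    intro h
    have := (div_eq_iff hk.ne').mp h
    nlinarith
  have hy2 : (2 * x - k) / k ≠ 1 := by
    intro h
    have := (div_eq_iff hk.ne').mp h
    nlinarith
  have hlin : HasDerivAt (fun x : ℝ => (2 * x - k) / k) (2 / k) x := by
    have h1 : HasDerivAt (fun x : ℝ => 2 * x - k) 2 x := by
      simpa using ((hasDerivAt_id x).const_mul 2).sub_const k
    simpa using h1.div_const k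
  have harc := (Real.hasDerivAt_arcsin hy1 hy2).comp x hlin
  have hprod : 0 < x * (k - x) := mul_pos hx (by linarith)
  have hs : 0 < Real.sqrt (x * (k - x)) := Real.sqrt_pos.2 hprod
  have h1 : Real.sqrt (x * (k - x)) ^ 2 = x * (k - x) := Real.sq_sqrt hprod.le
  have hkey : 1 - ((2 * x - k) / k) ^ 2 = (2 * Real.sqrt (x * (k - x)) / k) ^ 2 := by
    rw [div_pow, div_pow, mul_pow, h1]
    field_simp
    ring
  have hsqrt : Real.sqrt (1 - ((2 * x - k) / k) ^ 2) = 2 * Real.sqrt (x * (k - x)) / k := by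
    rw [hkey, Real.sqrt_sq (by positivity)]
  refine harc.congr_deriv ?_
  rw [hsqrt]
  exact (aux_calc _ _ hs.ne' hk.ne').symm

private lemma gr_mvt (k : ℝ) (hk : 0 < k) (a t : ℝ) (ha : 0 ≤ a) (hab : a + 1 ≤ k)
    (ht : 0 < t) (htk : t < k)
    (hmono : ∀ c ∈ Set.Ioo a (a + 1), c * (k - c) ≤ t * (k - t)) :
    1 / Real.sqrt (t * (k - t)) ≤
      Real.arcsin ((2 * (a + 1) - k) / k) - Real.arcsin ((2 * a - k) / k) := by
  set g : ℝ → ℝ := fun x => Real.arcsin ((2 * x - k) / k) with hg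
  have hcont : ContinuousOn g (Set.Icc a (a + 1)) :=
    (Real.continuous_arcsin.comp (by continuity)).continuousOn
  have hderiv : ∀ x ∈ Set.Ioo a (a + 1),
      HasDerivAt g (1 / Real.sqrt (x * (k - x))) x := by
    intro x hx
    exact gr_deriv k hk x (lt_of_le_of_lt ha hx.1) (lt_of_lt_of_le hx.2 hab)
  obtain ⟨c, hc, hceq⟩ := exists_hasDerivAt_eq_slope g
    (fun x => 1 / Real.sqrt (x * (k - x))) (by linarith : a < a + 1) hcont hderiv
  have hc0 : 0 < c := lt_of_le_of_lt ha hc.1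
  have hck : c < k := lt_of_lt_of_le hc.2 hab
  have hcp : 0 < c * (k - c) := mul_pos hc0 (by linarith)
  have h1 : 1 / Real.sqrt (t * (k - t)) ≤ 1 / Real.sqrt (c * (k - c)) := by
    apply one_div_le_one_div_of_le (Real.sqrt_pos.2 hcp)
    exact Real.sqrt_le_sqrt (hmono c hc)
  have h2 : (1 : ℝ) / Real.sqrt (c * (k - c)) = g (a + 1) - g a := by
    rw [hceq]; ring
  rw [hg] at h2; simp only at h2
  linarith [h1, h2.le, h2.ge]

theorem stmt11 (η k : ℕ) (hη : 0 < η) (hk : 2 * η ≤ k) :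
    ∑ j ∈ Finset.Icc η (k - η), 1 / Real.sqrt ((j : ℝ) * ((k : ℝ) - (j : ℝ))) ≤ π := by
  set m := k / 2 with hm
  have hk0 : 0 < k := lt_of_lt_of_le (by omega) hk
  have hkR : (0 : ℝ) < (k : ℝ) := by exact_mod_cast hk0
  have hηm : η ≤ m := by omega
  have hmkη : m ≤ k - η := by omega
  set G : ℕ → ℝ := fun n => Real.arcsin ((2 * (n : ℝ) - k) / k) with hG
  -- split the sum
  have hsplit : ∑ j ∈ Finset.Icc η (k - η), 1 / Real.sqrt ((j : ℝ) * ((k : ℝ) - (j : ℝ)))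
      = (∑ j ∈ Finset.Icc η m, 1 / Real.sqrt ((j : ℝ) * ((k : ℝ) - (j : ℝ))))
      + ∑ j ∈ Finset.Icc (m + 1) (k - η), 1 / Real.sqrt ((j : ℝ) * ((k : ℝ) - (j : ℝ))) := by
    have h1 : Finset.Icc η (k - η) = Finset.Ioc (η - 1) (k - η) := by
      rw [← Finset.Icc_add_one_left_eq_Ioc]; congr 1; omega
    have h2 : Finset.Icc η m = Finset.Ioc (η - 1) m := by
      rw [← Finset.Icc_add_one_left_eq_Ioc]; congr 1; omega
    have h3 : Finset.Icc (m + 1) (k - η) = Finset.Ioc m (k - η) := by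
      rw [← Finset.Icc_add_one_left_eq_Ioc]
    rw [h1, h2, h3]
    exact (Finset.sum_Ioc_consecutive _ (by omega) hmkη).symm
  -- per-term bound, first (decreasing) half
  have hb1 : ∀ j ∈ Finset.Icc η m,
      1 / Real.sqrt ((j : ℝ) * ((k : ℝ) - (j : ℝ))) ≤ G j - G (j - 1) := by
    intro j hj
    rw [Finset.mem_Icc] at hj
    have hj1 : 1 ≤ j := le_trans hη hj.1
    have hjm : 2 * j ≤ k := by omega
    have hjR : (1 : ℝ) ≤ (j : ℝ) := by exact_mod_cast hj1
    have hjmR : 2 * (j : ℝ) ≤ (k : ℝ) := by exact_mod_cast hjm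
    have key := gr_mvt k hkR ((j : ℝ) - 1) (j : ℝ) (by linarith) (by linarith)
      (by linarith) (by linarith)
      (by
        intro c hc
        obtain ⟨hc1, hc2⟩ := hc
        nlinarith)
    have hcast : ((j - 1 : ℕ) : ℝ) = (j : ℝ) - 1 := by
      have : (1 : ℕ) ≤ j := hj1
      push_cast [this]; ring
    simp only [hG, hcast]
    convert key using 3 <;> ring
  -- per-term bound, second (increasing) half
  have hb2 : ∀ j ∈ Finset.Icc (m + 1) (k - η),
      1 / Real.sqrt ((j : ℝ) * ((k : ℝ) - (j : ℝ))) ≤ G (j + 1) - G j := by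
    intro j hj
    rw [Finset.mem_Icc] at hj
    have hjm : k ≤ 2 * j := by omega
    have hjk : j + 1 ≤ k := by omega
    have hj0 : 0 < j := by omega
    have hjmR : (k : ℝ) ≤ 2 * (j : ℝ) := by exact_mod_cast hjm
    have hjkR : (j : ℝ) + 1 ≤ (k : ℝ) := by exact_mod_cast hjk
    have hj0R : (0 : ℝ) < (j : ℝ) := by exact_mod_cast hj0
    have key := gr_mvt k hkR (j : ℝ) (j : ℝ) (by linarith) hjkR hj0R (by linarith)
      (by
        intro c hc
        obtain ⟨hc1, hc2⟩ := hc
        nlinarith)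
    simp only [hG]
    convert key using 3 <;> push_cast <;> ring
  have hs1 : ∑ j ∈ Finset.Icc η m, 1 / Real.sqrt ((j : ℝ) * ((k : ℝ) - (j : ℝ)))
      ≤ G m - G (η - 1) := by
    calc ∑ j ∈ Finset.Icc η m, 1 / Real.sqrt ((j : ℝ) * ((k : ℝ) - (j : ℝ)))
        ≤ ∑ j ∈ Finset.Icc η m, (G j - G (j - 1)) := Finset.sum_le_sum hb1
      _ = G m - G (η - 1) := by
          have hIcc : Finset.Icc η m = Finset.Ico η (m + 1) := by
            rw [Finset.Ico_add_one_right_eq_Icc]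
          rw [hIcc, Finset.sum_Ico_eq_sum_range]
          have : ∀ i ∈ Finset.range (m + 1 - η), G (η + i) - G (η + i - 1)
              = G (η - 1 + (i + 1)) - G (η - 1 + i) := by
            intro i _
            congr 2 <;> omega
          rw [Finset.sum_congr rfl this, Finset.sum_range_sub (fun i => G (η - 1 + i))]
          congr 2
          omega
  have hs2 : ∑ j ∈ Finset.Icc (m + 1) (k - η), 1 / Real.sqrt ((j : ℝ) * ((k : ℝ) - (j : ℝ)))
      ≤ G (k - η + 1) - G (m + 1) := by
    calc ∑ j ∈ Finset.Icc (m + 1) (k - η), 1 / Real.sqrt ((j : ℝ) * ((k : ℝ) - (j : ℝ)))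
        ≤ ∑ j ∈ Finset.Icc (m + 1) (k - η), (G (j + 1) - G j) := Finset.sum_le_sum hb2
      _ = G (k - η + 1) - G (m + 1) := by
          have hIcc : Finset.Icc (m + 1) (k - η) = Finset.Ico (m + 1) (k - η + 1) := by
            rw [Finset.Ico_add_one_right_eq_Icc]
          rw [hIcc, Finset.sum_Ico_eq_sum_range]
          have : ∀ i ∈ Finset.range (k - η + 1 - (m + 1)), G (m + 1 + i + 1) - G (m + 1 + i)
              = G (m + 1 + (i + 1)) - G (m + 1 + i) := by
            intro i _
            congr 2 <;> omega
          rw [Finset.sum_congr rfl this, Finset.sum_range_sub (fun i => G (m + 1 + i))]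
          congr 2
          omega
  have hmono : G m ≤ G (m + 1) := by
    apply Real.monotone_arcsin
    push_cast
    exact (div_le_div_iff_of_pos_right hkR).mpr (by linarith)
  have hupper : G (k - η + 1) ≤ π / 2 := Real.arcsin_le_pi_div_two _
  have hlower : -(π / 2) ≤ G (η - 1) := Real.neg_pi_div_two_le_arcsin _
  rw [hsplit]
  linarith
end

section
/- For positive integers η, k with 2η ≤ k, ψ_η(k) ≤ ψ_η(k+1), where ψ_η(k) = Σ_{j=η}^{k−η} 1/√(j(k−j)). -/
open Real

/-- Polynomial core of the termwise inequality. -/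
lemma stmt12_poly (a b c d : ℝ) (ha1 : 1 ≤ a) (hb1 : 1 ≤ b) (hc1 : 1 ≤ c) (hd0 : 0 ≤ d)
    (hab : a * b ≤ a ^ 2 + 1 / 2) (hcd : c * d ≤ c ^ 2 - 1 / 2) :
    1 / (c * a) - 1 / (c * b) ≤ c / ((c ^ 2 + a ^ 2) * a) - d / ((c ^ 2 + a ^ 2) * b) := by
  have ha0 : 0 < a := by linarith
  have hb0 : 0 < b := by linarith
  have hc0 : 0 < c := by linarith
  have hs : 0 < c ^ 2 + a ^ 2 := by positivity
  rw [div_sub_div _ _ (by positivity : (c * a) ≠ 0) (by positivity : (c * b) ≠ 0),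
      div_sub_div _ _ (by positivity : ((c ^ 2 + a ^ 2) * a) ≠ 0)
        (by positivity : ((c ^ 2 + a ^ 2) * b) ≠ 0),
      div_le_div_iff₀ (by positivity) (by positivity)]
  have hint : 0 ≤ ((c ^ 2 + a ^ 2) * (a ^ 2 * b * c)) * ((c ^ 2 + a ^ 2) - (a * b + c * d)) := by
    apply mul_nonneg (by positivity)
    linarith
  nlinarith [hint]

/-- Termwise inequality: for `p = j`, `q = k - j`,
`1/√(j(k-j)) - 1/√(j(k+1-j)) ≤ χ(j+1) - χ(j)`. -/
lemma stmt12_key (p q : ℝ) (hp : 1 ≤ p) (hq : 1 ≤ q) :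
    1 / Real.sqrt (p * q) - 1 / Real.sqrt (p * (q + 1)) ≤
      Real.sqrt p / ((p + q) * Real.sqrt q) - Real.sqrt (p - 1) / ((p + q) * Real.sqrt (q + 1)) := by
  have hp0 : (0:ℝ) ≤ p := by linarith
  have hq0 : (0:ℝ) ≤ q := by linarith
  have ha1 : 1 ≤ Real.sqrt q := by simpa using Real.sqrt_le_sqrt hq
  have hb1 : 1 ≤ Real.sqrt (q + 1) := by simpa using Real.sqrt_le_sqrt (by linarith : (1:ℝ) ≤ q + 1)
  have hc1 : 1 ≤ Real.sqrt p := by simpa using Real.sqrt_le_sqrt hp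
  have hd0 : 0 ≤ Real.sqrt (p - 1) := Real.sqrt_nonneg _
  have hab : Real.sqrt q * Real.sqrt (q + 1) ≤ Real.sqrt q ^ 2 + 1 / 2 := by
    rw [Real.sq_sqrt hq0, ← Real.sqrt_mul hq0]
    calc Real.sqrt (q * (q + 1)) ≤ Real.sqrt ((q + 1 / 2) ^ 2) :=
          Real.sqrt_le_sqrt (by nlinarith)
      _ = q + 1 / 2 := Real.sqrt_sq (by linarith)
  have hcd : Real.sqrt p * Real.sqrt (p - 1) ≤ Real.sqrt p ^ 2 - 1 / 2 := by
    rw [Real.sq_sqrt hp0, ← Real.sqrt_mul hp0]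
    calc Real.sqrt (p * (p - 1)) ≤ Real.sqrt ((p - 1 / 2) ^ 2) :=
          Real.sqrt_le_sqrt (by nlinarith)
      _ = p - 1 / 2 := Real.sqrt_sq (by linarith)
  have hmain := stmt12_poly (Real.sqrt q) (Real.sqrt (q + 1)) (Real.sqrt p) (Real.sqrt (p - 1))
    ha1 hb1 hc1 hd0 hab hcd
  rw [Real.sq_sqrt hp0, Real.sq_sqrt hq0, ← Real.sqrt_mul hp0 q, ← Real.sqrt_mul hp0 (q + 1)]
    at hmain
  exact hmain

/-- Final boundary comparison: `χ(N+1) ≤ g(N+1)`. -/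
lemma stmt12_fin (A B : ℝ) (hA : 1 ≤ A) (hB : 1 ≤ B) :
    Real.sqrt A / ((A + B) * Real.sqrt B) ≤ 1 / Real.sqrt ((A + 1) * B) := by
  have hA0 : (0:ℝ) ≤ A := by linarith
  have hB0 : (0:ℝ) < B := by linarith
  have hsB : 0 < Real.sqrt B := Real.sqrt_pos.2 hB0
  rw [div_le_div_iff₀ (by positivity) (by positivity), one_mul,
      Real.sqrt_mul (by linarith : (0:ℝ) ≤ A + 1)]
  have h1 : Real.sqrt A * Real.sqrt (A + 1) ≤ A + B := by
    rw [← Real.sqrt_mul hA0]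
    calc Real.sqrt (A * (A + 1)) ≤ Real.sqrt ((A + 1) ^ 2) := Real.sqrt_le_sqrt (by nlinarith)
      _ = A + 1 := Real.sqrt_sq (by linarith)
      _ ≤ A + B := by linarith
  calc Real.sqrt A * (Real.sqrt (A + 1) * Real.sqrt B)
      = (Real.sqrt A * Real.sqrt (A + 1)) * Real.sqrt B := by ring
    _ ≤ (A + B) * Real.sqrt B := by
        exact mul_le_mul_of_nonneg_right h1 (le_of_lt hsB)

/-- The telescoping function. -/
noncomputable def stmt12_chi (k j : ℕ) : ℝ :=
  Real.sqrt ((j : ℝ) - 1) / ((k : ℝ) * Real.sqrt ((k : ℝ) + 1 - (j : ℝ)))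

theorem stmt12 (η k : ℕ) (hη : 0 < η) (hk : 2 * η ≤ k) :
    ∑ j ∈ Finset.Icc η (k - η), 1 / Real.sqrt ((j : ℝ) * ((k : ℝ) - (j : ℝ)))
      ≤ ∑ j ∈ Finset.Icc η (k + 1 - η), 1 / Real.sqrt ((j : ℝ) * ((k : ℝ) + 1 - (j : ℝ))) := by
  have hηk : η ≤ k := by omega
  set N := k - η with hNdef
  have hηN : η ≤ N := by omega
  have hsucc : k + 1 - η = N + 1 := by omega
  have hNcast : (N : ℝ) = (k : ℝ) - (η : ℝ) := by
    rw [hNdef]; exact Nat.cast_sub hηk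
  have hη1 : (1:ℝ) ≤ (η : ℝ) := by exact_mod_cast hη
  rw [hsucc, Finset.sum_Icc_succ_top (by omega : η ≤ N + 1)]
  -- termwise bound
  have hterm : ∀ j ∈ Finset.Icc η N,
      1 / Real.sqrt ((j : ℝ) * ((k : ℝ) - (j : ℝ)))
        - 1 / Real.sqrt ((j : ℝ) * ((k : ℝ) + 1 - (j : ℝ)))
      ≤ stmt12_chi k (j + 1) - stmt12_chi k j := by
    intro j hj
    simp only [Finset.mem_Icc] at hj
    have hjk : j + η ≤ k := by omega
    have hp : (1:ℝ) ≤ (j : ℝ) := by exact_mod_cast le_trans hη hj.1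
    have hq : (1:ℝ) ≤ (k : ℝ) - (j : ℝ) := by
      have : (j : ℝ) + (η : ℝ) ≤ (k : ℝ) := by exact_mod_cast hjk
      linarith
    have hkey := stmt12_key (j : ℝ) ((k : ℝ) - (j : ℝ)) hp hq
    have e1 : (k : ℝ) - (j : ℝ) + 1 = (k : ℝ) + 1 - (j : ℝ) := by ring
    have e2 : (j : ℝ) + ((k : ℝ) - (j : ℝ)) = (k : ℝ) := by ring
    rw [e1, e2] at hkey
    have e3 : stmt12_chi k (j + 1)
        = Real.sqrt (j : ℝ) / ((k : ℝ) * Real.sqrt ((k : ℝ) - (j : ℝ))) := by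
      unfold stmt12_chi
      have h1 : ((j + 1 : ℕ) : ℝ) - 1 = (j : ℝ) := by push_cast; ring
      have h2 : (k : ℝ) + 1 - ((j + 1 : ℕ) : ℝ) = (k : ℝ) - (j : ℝ) := by push_cast; ring
      rw [h1, h2]
    have e4 : stmt12_chi k j
        = Real.sqrt ((j : ℝ) - 1) / ((k : ℝ) * Real.sqrt ((k : ℝ) + 1 - (j : ℝ))) := rfl
    rw [e3, e4]
    exact hkey
  -- telescoping
  have htele : ∑ j ∈ Finset.Icc η N, (stmt12_chi k (j + 1) - stmt12_chi k j)
      = stmt12_chi k (N + 1) - stmt12_chi k η := by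
    rw [← Finset.Ico_add_one_right_eq_Icc, Finset.sum_Ico_eq_sum_range]
    have h := Finset.sum_range_sub (fun i => stmt12_chi k (η + i)) (N + 1 - η)
    have h2 : η + (N + 1 - η) = N + 1 := by omega
    rw [h2, Nat.add_zero] at h
    exact h
  have hchi0 : 0 ≤ stmt12_chi k η := by
    unfold stmt12_chi
    positivity
  have hfin : stmt12_chi k (N + 1)
      ≤ 1 / Real.sqrt (((N + 1 : ℕ) : ℝ) * ((k : ℝ) + 1 - ((N + 1 : ℕ) : ℝ))) := by
    have h1 : ((N + 1 : ℕ) : ℝ) - 1 = (N : ℝ) := by push_cast; ring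
    have h2 : (k : ℝ) + 1 - ((N + 1 : ℕ) : ℝ) = (η : ℝ) := by
      push_cast; rw [hNcast]; ring
    have h3 : ((N + 1 : ℕ) : ℝ) = (N : ℝ) + 1 := by push_cast; ring
    unfold stmt12_chi
    rw [h1, h2, h3]
    have hA : (1:ℝ) ≤ (N : ℝ) := by
      have : η ≤ N := hηN
      have : (η : ℝ) ≤ (N : ℝ) := by exact_mod_cast this
      linarith
    have hkc : (k : ℝ) = (N : ℝ) + (η : ℝ) := by rw [hNcast]; ring
    rw [hkc]
    exact stmt12_fin (N : ℝ) (η : ℝ) hA hη1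
  have hsum : (∑ j ∈ Finset.Icc η N, 1 / Real.sqrt ((j : ℝ) * ((k : ℝ) - (j : ℝ))))
      - (∑ j ∈ Finset.Icc η N, 1 / Real.sqrt ((j : ℝ) * ((k : ℝ) + 1 - (j : ℝ))))
      ≤ stmt12_chi k (N + 1) - stmt12_chi k η := by
    rw [← Finset.sum_sub_distrib]
    calc ∑ j ∈ Finset.Icc η N,
          (1 / Real.sqrt ((j : ℝ) * ((k : ℝ) - (j : ℝ)))
            - 1 / Real.sqrt ((j : ℝ) * ((k : ℝ) + 1 - (j : ℝ))))
        ≤ ∑ j ∈ Finset.Icc η N, (stmt12_chi k (j + 1) - stmt12_chi k j) :=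
          Finset.sum_le_sum hterm
      _ = stmt12_chi k (N + 1) - stmt12_chi k η := htele
  linarith
end

section
/- For odd n and p ∈ [0, 1/2), P[B(p,n) ≥ n/2] ≤ (2σ)^{n+1}/2, where σ = √(p(1−p)). -/
open Real

lemma choose_sum_half (k : ℕ) :
    ∑ h ∈ Finset.Icc (k + 1) (2 * k + 1), ((2 * k + 1).choose h : ℕ) = 4 ^ k := by
  have h1 : Finset.Icc (k + 1) (2 * k + 1) = Finset.Ico (k + 1) (2 * k + 2) := by
    exact (Finset.Ico_add_one_right_eq_Icc (k + 1) (2 * k + 1)).symm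
  have h2 := Finset.sum_Ico_consecutive (fun h => (2 * k + 1).choose h)
    (Nat.zero_le (k + 1)) (by omega : k + 1 ≤ 2 * k + 2)
  have h3 : ∑ h ∈ Finset.Ico 0 (2 * k + 2), (2 * k + 1).choose h = 2 ^ (2 * k + 1) := by
    rw [← Finset.range_eq_Ico]
    exact Nat.sum_range_choose (2 * k + 1)
  have h4 : ∑ h ∈ Finset.Ico 0 (k + 1), (2 * k + 1).choose h = 4 ^ k := by
    rw [← Finset.range_eq_Ico]
    exact Nat.sum_range_choose_halfway k
  have : ∑ h ∈ Finset.Ico (k + 1) (2 * k + 2), (2 * k + 1).choose h = 2 ^ (2 * k + 1) - 4 ^ k := by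
    omega
  rw [h1, this]
  have : (2:ℕ) ^ (2 * k + 1) = 2 * 4 ^ k := by
    rw [pow_succ, pow_mul]; ring
  omega

theorem stmt13 (n : ℕ) (hn : Odd n) (p : ℝ) (hp0 : 0 ≤ p) (hp : p < 1 / 2) :
    binomTail n ((n + 1) / 2) p ≤ (2 * Real.sqrt (p * (1 - p))) ^ (n + 1) / 2 := by
  obtain ⟨k, rfl⟩ := hn
  have h1p : (0:ℝ) ≤ 1 - p := by linarith
  have hpq : p ≤ 1 - p := by linarith
  have hx : 0 ≤ p * (1 - p) := mul_nonneg hp0 h1p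
  have hm : (2 * k + 1 + 1) / 2 = k + 1 := by omega
  rw [hm, binomTail]
  -- per-term bound
  have hterm : ∀ h ∈ Finset.Icc (k + 1) (2 * k + 1),
      ((2 * k + 1).choose h : ℝ) * p ^ h * (1 - p) ^ (2 * k + 1 - h)
        ≤ ((2 * k + 1).choose h : ℝ) * (p ^ (k + 1) * (1 - p) ^ k) := by
    intro h hh
    rw [Finset.mem_Icc] at hh
    obtain ⟨hh1, hh2⟩ := hh
    rw [mul_assoc]
    have key : p ^ h * (1 - p) ^ (2 * k + 1 - h) ≤ p ^ (k + 1) * (1 - p) ^ k := by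
      calc p ^ h * (1 - p) ^ (2 * k + 1 - h)
          = p ^ (k + 1) * (p ^ (h - (k + 1)) * (1 - p) ^ (2 * k + 1 - h)) := by
            rw [← mul_assoc, ← pow_add, Nat.add_sub_cancel' hh1]
        _ ≤ p ^ (k + 1) * ((1 - p) ^ (h - (k + 1)) * (1 - p) ^ (2 * k + 1 - h)) := by
            apply mul_le_mul_of_nonneg_left _ (pow_nonneg hp0 _)
            apply mul_le_mul_of_nonneg_right _ (pow_nonneg h1p _)
            exact pow_le_pow_left₀ hp0 hpq _
        _ = p ^ (k + 1) * (1 - p) ^ k := by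
            rw [← pow_add, show h - (k + 1) + (2 * k + 1 - h) = k from by omega]
    exact mul_le_mul_of_nonneg_left key (Nat.cast_nonneg _)
  calc ∑ h ∈ Finset.Icc (k + 1) (2 * k + 1),
        ((2 * k + 1).choose h : ℝ) * p ^ h * (1 - p) ^ (2 * k + 1 - h)
      ≤ ∑ h ∈ Finset.Icc (k + 1) (2 * k + 1),
        ((2 * k + 1).choose h : ℝ) * (p ^ (k + 1) * (1 - p) ^ k) :=
        Finset.sum_le_sum hterm
    _ = (4:ℝ) ^ k * (p ^ (k + 1) * (1 - p) ^ k) := by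
        rw [← Finset.sum_mul]
        congr 1
        rw [← Nat.cast_sum, choose_sum_half]
        push_cast; ring
    _ ≤ (2 * Real.sqrt (p * (1 - p))) ^ (2 * k + 1 + 1) / 2 := by
        have hsq : Real.sqrt (p * (1 - p)) ^ (2 * k + 1 + 1) = (p * (1 - p)) ^ (k + 1) := by
          rw [show 2 * k + 1 + 1 = 2 * (k + 1) by ring, pow_mul, Real.sq_sqrt hx]
        rw [mul_pow, hsq]
        have h2 : (2:ℝ) ^ (2 * k + 1 + 1) = 2 * (2 * 4 ^ k) := by
          rw [show 2 * k + 1 + 1 = 2 * k + 2 by ring, pow_add, pow_mul]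
          ring
        rw [h2]
        have key : (4:ℝ) ^ k * (p ^ (k + 1) * (1 - p) ^ k)
            ≤ 4 ^ k * (p ^ (k + 1) * ((1 - p) ^ k * (2 * (1 - p)))) := by
          apply mul_le_mul_of_nonneg_left _ (by positivity)
          apply mul_le_mul_of_nonneg_left _ (pow_nonneg hp0 _)
          nlinarith [pow_nonneg h1p k]
        calc (4:ℝ) ^ k * (p ^ (k + 1) * (1 - p) ^ k)
            ≤ 4 ^ k * (p ^ (k + 1) * ((1 - p) ^ k * (2 * (1 - p)))) := key
          _ = 2 * (2 * 4 ^ k) * (p * (1 - p)) ^ (k + 1) / 2 := by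
              rw [mul_pow, pow_succ, pow_succ]
              ring
end

section
/- For odd n and p ∈ [0, 1/2), P[B(p,n) ≥ n/2] ≥ (2σ)^{n+1} e^{l(n+1)} / √(2π(n+1)), where σ = √(p(1−p)) and l(n) = −(9n+1)/(3n(12n+1)). -/
open Real

namespace Stmt14Aux
open Stirling Filter Topology Nat

lemma diff_ge (m : ℕ) : 1/(12*((m:ℝ)+1)+1) - 1/(12*((m:ℝ)+2)+1) ≤
    Real.log (stirlingSeq (m+1)) - Real.log (stirlingSeq (m+2)) := by
  have h := Stirling.log_stirlingSeq_diff_hasSum m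
  have h0 := le_hasSum h 0 (fun j _ => by positivity)
  refine le_trans ?_ h0
  have hm : (0:ℝ) ≤ (m:ℝ) := Nat.cast_nonneg m
  have e : (1:ℝ) / (2 * ((0:ℕ) + 1 : ℕ) + 1) * ((1 / (2 * (((m:ℕ)+1 : ℕ):ℝ) + 1)) ^ 2) ^ ((0:ℕ) + 1)
      = 1/(3*(2*((m:ℝ)+1)+1)^2) := by
    push_cast; rw [pow_one]; field_simp; norm_num
  rw [e, div_sub_div _ _ (by positivity) (by positivity), div_le_div_iff₀ (by positivity) (by positivity)]
  nlinarith [sq_nonneg ((m:ℝ))]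

lemma diff_le (m : ℕ) : Real.log (stirlingSeq (m+1)) - Real.log (stirlingSeq (m+2)) ≤
    1/(12*((m:ℝ)+1)) - 1/(12*((m:ℝ)+2)) := by
  have h := Stirling.log_stirlingSeq_diff_hasSum m
  set q : ℝ := (1 / (2 * ((m:ℝ) + 1) + 1)) ^ 2 with hq
  have hq0 : 0 ≤ q := sq_nonneg _
  have hq1 : q < 1 := by
    rw [hq, one_div, inv_pow]
    exact inv_lt_one_of_one_lt₀ (one_lt_pow₀ (by nlinarith [Nat.cast_nonneg (α := ℝ) m]) two_ne_zero)
  have g : HasSum (fun k : ℕ => (1:ℝ)/3 * q ^ (k+1)) (1/3 * (q / (1 - q))) := by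
    have := (hasSum_geometric_of_lt_one hq0 hq1).mul_left q
    simp_rw [← _root_.pow_succ'] at this
    exact this.mul_left (1/3)
  have hab : ∀ k : ℕ, (1:ℝ) / (2 * ↑(k + 1) + 1) * q ^ (k+1) ≤ (1:ℝ)/3 * q ^ (k+1) := by
    intro k
    have : (1:ℝ) / (2 * ↑(k + 1) + 1) ≤ 1/3 := by
      rw [div_le_div_iff₀ (by positivity) (by norm_num)]
      push_cast; linarith [Nat.cast_nonneg (α := ℝ) k]
    exact mul_le_mul_of_nonneg_right this (pow_nonneg hq0 _)
  have key : Real.log (stirlingSeq (m+1)) - Real.log (stirlingSeq (m+2)) ≤ 1/3 * (q/(1-q)) := by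
    refine hasSum_le (fun k => ?_) h g
    convert hab k using 2 <;> push_cast [hq] <;> rfl
  refine key.trans_eq ?_
  have h1 : ((m:ℝ)+1) ≠ 0 := by positivity
  have h2 : ((m:ℝ)+2) ≠ 0 := by positivity
  have h3 : (2*((m:ℝ)+1)+1) ≠ 0 := by positivity
  have h4 : 1 - q ≠ 0 := by linarith
  rw [hq] at h4 ⊢
  have hd : (24 + (m:ℝ)*36 + (m:ℝ)^2*12) ≠ 0 := by positivity
  field_simp
  linear_combination 3 * mul_inv_cancel₀ (show (8 + (m:ℝ)*12 + (m:ℝ)^2*4) ≠ 0 by positivity)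


lemma log_tendsto : Tendsto (fun m : ℕ => Real.log (stirlingSeq (m+1))) atTop (𝓝 (Real.log (√π))) := by
  have h1 : Tendsto (fun m : ℕ => stirlingSeq (m+1)) atTop (𝓝 (√π)) :=
    tendsto_stirlingSeq_sqrt_pi.comp (tendsto_add_atTop_nat 1)
  exact (Real.continuousAt_log (by positivity)).tendsto.comp h1

lemma inv_tendsto (c : ℝ) : Tendsto (fun m : ℕ => 1/(12*((m:ℝ)+1)+c)) atTop (𝓝 0) := by
  simp_rw [one_div]
  apply Tendsto.comp tendsto_inv_atTop_zero
  apply tendsto_atTop_add_const_right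
  apply Tendsto.const_mul_atTop (by norm_num : (0:ℝ) < 12)
  exact tendsto_atTop_add_const_right _ _ tendsto_natCast_atTop_atTop

lemma stirling_le (m : ℕ) : stirlingSeq (m+1) ≤ √π * Real.exp (1/(12*((m:ℝ)+1))) := by
  have mono : Monotone (fun m : ℕ => Real.log (stirlingSeq (m+1)) - 1/(12*((m:ℝ)+1))) := by
    apply monotone_nat_of_le_succ
    intro m
    have h := diff_le m
    have e1 : m + 1 + 1 = m + 2 := rfl
    rw [e1]
    push_cast
    ring_nf
    ring_nf at h
    linarith
  have lim : Tendsto (fun m : ℕ => Real.log (stirlingSeq (m+1)) - 1/(12*((m:ℝ)+1))) atTop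
      (𝓝 (Real.log (√π) - 0)) := by
    exact log_tendsto.sub ((inv_tendsto 0).congr (fun m => by rw [add_zero]))
  have h := mono.ge_of_tendsto lim m
  simp only [sub_zero] at h
  have hlog : Real.log (stirlingSeq (m+1)) ≤ Real.log (√π) + 1/(12*((m:ℝ)+1)) := by linarith
  calc stirlingSeq (m+1) = Real.exp (Real.log (stirlingSeq (m+1))) :=
        (Real.exp_log (stirlingSeq'_pos m)).symm
    _ ≤ Real.exp (Real.log (√π) + 1/(12*((m:ℝ)+1))) := Real.exp_le_exp.mpr hlog
    _ = √π * Real.exp (1/(12*((m:ℝ)+1))) := by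
        rw [Real.exp_add, Real.exp_log (by positivity)]

lemma stirling_ge (m : ℕ) : √π * Real.exp (1/(12*((m:ℝ)+1)+1)) ≤ stirlingSeq (m+1) := by
  have anti : Antitone (fun m : ℕ => Real.log (stirlingSeq (m+1)) - 1/(12*((m:ℝ)+1)+1)) := by
    apply antitone_nat_of_succ_le
    intro m
    have h := diff_ge m
    have e1 : m + 1 + 1 = m + 2 := rfl
    rw [e1]
    push_cast
    ring_nf
    ring_nf at h
    linarith
  have lim : Tendsto (fun m : ℕ => Real.log (stirlingSeq (m+1)) - 1/(12*((m:ℝ)+1)+1)) atTop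
      (𝓝 (Real.log (√π) - 0)) := log_tendsto.sub (inv_tendsto 1)
  have h := anti.le_of_tendsto lim m
  simp only [sub_zero] at h
  have hlog : Real.log (√π) + 1/(12*((m:ℝ)+1)+1) ≤ Real.log (stirlingSeq (m+1)) := by linarith
  calc √π * Real.exp (1/(12*((m:ℝ)+1)+1)) = Real.exp (Real.log (√π) + 1/(12*((m:ℝ)+1)+1)) := by
        rw [Real.exp_add, Real.exp_log (by positivity)]
    _ ≤ Real.exp (Real.log (stirlingSeq (m+1))) := Real.exp_le_exp.mpr hlog
    _ = stirlingSeq (m+1) := Real.exp_log (stirlingSeq'_pos m)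


lemma factorial_eq (n : ℕ) (hn : 1 ≤ n) :
    ((n ! : ℕ) : ℝ) = stirlingSeq n * (√(2*(n:ℝ)) * ((n:ℝ)/Real.exp 1)^n) := by
  have hn' : (0:ℝ) < (n:ℝ) := by exact_mod_cast hn
  rw [stirlingSeq]
  field_simp

lemma central_bound (k : ℕ) (hk : 1 ≤ k) :
    4^k * Real.exp (1/(24*(k:ℝ)+1) - 1/(6*(k:ℝ))) ≤ ((2*k).choose k : ℝ) * √(π*(k:ℝ)) := by
  obtain ⟨j, rfl⟩ : ∃ j, k = j+1 := ⟨k-1, (Nat.succ_pred_eq_of_pos hk).symm⟩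
  set K : ℝ := ((j:ℝ)+1) with hK
  have hK0 : 0 < K := by positivity
  set A : ℝ := 1/(24*K+1) with hA
  set b : ℝ := 1/(12*K) with hb
  set U : ℝ := √π * Real.exp b * (√(2*K) * (K/Real.exp 1)^(j+1)) with hU
  set L : ℝ := √π * Real.exp A * (√(2*(2*K)) * ((2*K)/Real.exp 1)^(2*(j+1))) with hL
  have hU0 : 0 < U := by positivity
  have castk : ((j+1 : ℕ) : ℝ) = K := by push_cast; ring
  have cast2k : ((2*(j+1) : ℕ) : ℝ) = 2*K := by push_cast; ring
  -- k! ≤ U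
  have hfU : ((j+1)! : ℝ) ≤ U := by
    have h1 := stirling_le j
    have h2 := factorial_eq (j+1) (by omega)
    rw [castk] at h2
    rw [h2, hU]
    have : ((j:ℝ)+1) = K := rfl
    apply mul_le_mul_of_nonneg_right _ (by positivity)
    exact h1
  -- L ≤ (2k)!
  have hfL : L ≤ (((2*(j+1))! : ℕ) : ℝ) := by
    have h1 := stirling_ge (2*j+1)
    have h2 := factorial_eq (2*(j+1)) (by omega)
    rw [cast2k] at h2
    have e : 2*j+1+1 = 2*(j+1) := by omega
    rw [e] at h1
    have h1' : √π * Real.exp A ≤ stirlingSeq (2*(j+1)) := by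
      convert h1 using 4
      push_cast [hA, hK]
      ring
    rw [h2, hL]
    exact mul_le_mul_of_nonneg_right h1' (by positivity)
  -- identity
  have epow : ((2*K)/Real.exp 1)^(2*(j+1)) = 4^(j+1) * (((K/Real.exp 1))^(j+1))^2 := by
    rw [pow_mul]
    rw [show ((2*K)/Real.exp 1)^2 = 4*(K/Real.exp 1)^2 by field_simp; ring]
    rw [mul_pow, ← pow_mul, ← pow_mul]
    ring_nf
  have s2 : √(2*(2*K)) = 2*√K := by
    rw [show (2:ℝ)*(2*K) = 2^2*K by ring, Real.sqrt_mul (by positivity), Real.sqrt_sq (by norm_num)]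
  have eexp : Real.exp (A-2*b) * (Real.exp b)^2 = Real.exp A := by
    rw [sq, ← Real.exp_add, ← Real.exp_add]
    congr 1
    ring
  have hid : √(π*K) * L = (4:ℝ)^(j+1) * Real.exp (A - 2*b) * U^2 := by
    rw [hL, hU, Real.sqrt_mul pi_pos.le, s2, epow, mul_pow, mul_pow, mul_pow,
      Real.sq_sqrt (show (0:ℝ) ≤ 2*K by positivity), Real.sq_sqrt pi_pos.le, ← eexp]
    have mp : √π * √π = π := Real.mul_self_sqrt pi_pos.le
    have mk : √K * √K = K := Real.mul_self_sqrt hK0.le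
    linear_combination (2*(4:ℝ)^(j+1) * Real.exp (A-2*b) * Real.exp b^2 * ((K/Real.exp 1)^(j+1))^2 * (√K*√K)) * mp
      + (2*(4:ℝ)^(j+1) * Real.exp (A-2*b) * Real.exp b^2 * ((K/Real.exp 1)^(j+1))^2 * π) * mk
  have hC : (((2*(j+1)).choose (j+1) : ℕ) : ℝ) * ((j+1)! : ℝ) * ((j+1)! : ℝ) = (((2*(j+1))! : ℕ) : ℝ) := by
    have h := Nat.choose_mul_factorial_mul_factorial (show j+1 ≤ 2*(j+1) by omega)
    rw [show 2*(j+1)-(j+1) = j+1 from by omega] at h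
    exact_mod_cast h
  have step : (4^(j+1) * Real.exp (A - 2*b)) * U^2 ≤ ((((2*(j+1)).choose (j+1) : ℕ) : ℝ) * √(π*K)) * U^2 := by
    have t1 : √(π*K) * L ≤ √(π*K) * (((2*(j+1))! : ℕ) : ℝ) :=
      mul_le_mul_of_nonneg_left hfL (Real.sqrt_nonneg _)
    have t2 : √(π*K) * (((2*(j+1))! : ℕ) : ℝ) = (((2*(j+1)).choose (j+1) : ℕ) : ℝ) * √(π*K) * (((j+1)! : ℝ) * ((j+1)! : ℝ)) := by
      rw [← hC]; ring
    have f0 : (0:ℝ) ≤ ((j+1)! : ℝ) := by positivity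
    have t3 : (((2*(j+1)).choose (j+1) : ℕ) : ℝ) * √(π*K) * (((j+1)! : ℝ) * ((j+1)! : ℝ)) ≤ (((2*(j+1)).choose (j+1) : ℕ) : ℝ) * √(π*K) * U^2 := by
      apply mul_le_mul_of_nonneg_left _ (by positivity)
      nlinarith [hfU, f0, hU0]
    linarith [hid, t1, t2, t3]
  have main : 4^(j+1) * Real.exp (A - 2*b) ≤ (((2*(j+1)).choose (j+1) : ℕ) : ℝ) * √(π*K) :=
    le_of_mul_le_mul_right (by simpa [mul_assoc] using step) (by positivity)
  have eexp2 : 1/(24*((j+1:ℕ):ℝ)+1) - 1/(6*((j+1:ℕ):ℝ)) = A - 2*b := by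
    rw [hA, hb, castk]
    have : K ≠ 0 := ne_of_gt hK0
    field_simp
    ring
  rw [eexp2, castk]
  exact main

end Stmt14Aux

open Stmt14Aux in
theorem stmt14 (n : ℕ) (hn : Odd n) (p : ℝ) (hp0 : 0 ≤ p) (hp : p < 1 / 2) :
    binomTail n ((n + 1) / 2) p
      ≥ (2 * Real.sqrt (p * (1 - p))) ^ (n + 1) * Real.exp (l (n + 1))
          / Real.sqrt (2 * π * (n + 1)) := by
  obtain ⟨j, rfl⟩ := hn
  have hp1 : p ≤ 1 := by linarith
  have h1p : (0:ℝ) ≤ 1 - p := by linarith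
  have hx0 : (0:ℝ) ≤ p * (1 - p) := mul_nonneg hp0 h1p
  have hkd : (2*j+1+1)/2 = j+1 := by omega
  rw [ge_iff_le, hkd]
  set K : ℝ := (j:ℝ)+1 with hKdef
  have hK0 : (0:ℝ) < K := by positivity
  have hterm : ((2*j+1).choose (j+1) : ℝ) * p^(j+1) * (1-p)^((2*j+1)-(j+1))
      ≤ binomTail (2*j+1) (j+1) p := by
    rw [binomTail]
    apply Finset.single_le_sum (f := fun h => ((2*j+1).choose h : ℝ) * p^h * (1-p)^((2*j+1)-h))
    · intro i _
      exact mul_nonneg (mul_nonneg (by positivity) (pow_nonneg hp0 _)) (pow_nonneg h1p _)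
    · rw [Finset.mem_Icc]; omega
  rw [show (2*j+1)-(j+1) = j from by omega] at hterm
  have hhalf : 2 * (2*j+1).choose (j+1) = (2*(j+1)).choose (j+1) := by
    have h1 : (2*(j+1)).choose (j+1) = (2*j+1).choose j + (2*j+1).choose (j+1) := by
      rw [show 2*(j+1) = (2*j+1)+1 from by omega]
      exact Nat.choose_succ_succ (2*j+1) j
    have h2 : (2*j+1).choose j = (2*j+1).choose (j+1) := by
      have h3 := Nat.choose_symm (show j+1 ≤ 2*j+1 by omega)
      rw [show (2*j+1)-(j+1) = j from by omega] at h3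
      exact h3
    omega
  have hcb := central_bound (j+1) (by omega)
  push_cast at hcb
  have hpw : (p*(1-p))^(j+1) ≤ p^(j+1) * (1-p)^j := by
    rw [mul_pow]
    apply mul_le_mul_of_nonneg_left _ (pow_nonneg hp0 _)
    exact pow_le_pow_of_le_one h1p (by linarith) (by omega)
  have hsq : (2*√(p*(1-p)))^(2*j+1+1) = 4^(j+1) * (p*(1-p))^(j+1) := by
    rw [show 2*j+1+1 = 2*(j+1) from by omega, pow_mul,
      show (2*√(p*(1-p)))^2 = 4*(√(p*(1-p)))^2 from by ring, Real.sq_sqrt hx0, mul_pow]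
  have hs : √(2*π*((↑(2*j+1):ℝ)+1)) = 2*√(π*K) := by
    rw [show 2*π*((↑(2*j+1):ℝ)+1) = 2^2*(π*K) from by push_cast; ring,
      Real.sqrt_mul (by positivity), Real.sqrt_sq (by norm_num)]
  have hl : l ((↑(2*j+1):ℝ)+1) = 1/(24*K+1) - 1/(6*K) := by
    rw [l]
    push_cast
    rw [hKdef]
    have h1 : (24*((j:ℝ)+1)+1) ≠ 0 := by positivity
    have h2 : (6*((j:ℝ)+1)) ≠ 0 := by positivity
    field_simp
    ring
  rw [hsq, hl, hs]
  refine le_trans ?_ hterm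
  have hch : 4^(j+1) * Real.exp (1/(24*K+1) - 1/(6*K)) / (2*√(π*K))
      ≤ ((2*j+1).choose (j+1) : ℝ) := by
    rw [div_le_iff₀ (by positivity)]
    have hc2 : ((2*(j+1)).choose (j+1) : ℝ) = 2 * ((2*j+1).choose (j+1) : ℝ) := by
      exact_mod_cast hhalf.symm
    calc (4:ℝ)^(j+1) * Real.exp (1/(24*K+1) - 1/(6*K))
        ≤ ((2*(j+1)).choose (j+1) : ℝ) * √(π*K) := by
          convert hcb using 4 <;> rw [hKdef] <;> push_cast <;> ring
      _ = ((2*j+1).choose (j+1) : ℝ) * (2*√(π*K)) := by rw [hc2]; ring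
  calc 4^(j+1) * (p*(1-p))^(j+1) * Real.exp (1/(24*K+1) - 1/(6*K)) / (2*√(π*K))
      = (4^(j+1) * Real.exp (1/(24*K+1) - 1/(6*K)) / (2*√(π*K))) * (p*(1-p))^(j+1) := by ring
    _ ≤ ((2*j+1).choose (j+1) : ℝ) * (p*(1-p))^(j+1) :=
        mul_le_mul_of_nonneg_right hch (pow_nonneg hx0 _)
    _ ≤ ((2*j+1).choose (j+1) : ℝ) * (p^(j+1) * (1-p)^j) :=
        mul_le_mul_of_nonneg_left hpw (by positivity)
    _ = ((2*j+1).choose (j+1) : ℝ) * p^(j+1) * (1-p)^j := by ring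
end

section
/- For even m and p ∈ [0, 1/2), P[B(p,m) ≥ m/2] ≤ (2σ)^m (1/2 + 1/√(2πm)), where σ = √(p(1−p)); in particular P[B(p,m) ≥ m/2] ≤ (2σ)^m (the Chernoff bound). -/
open Real

noncomputable def aSeq (n : ℕ) : ℝ := Nat.centralBinom n * Real.sqrt n / 4 ^ n

lemma aSeq_eq (n : ℕ) (hn : n ≠ 0) :
    aSeq n = Stirling.stirlingSeq (2 * n) / (Stirling.stirlingSeq n) ^ 2 := by
  have hfact : ∀ k : ℕ, k ≠ 0 → (k.factorial : ℝ) = Stirling.stirlingSeq k * (Real.sqrt (2 * k) * (k / Real.exp 1) ^ k) := by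
    intro k hk
    rw [Stirling.stirlingSeq]
    have h1 : Real.sqrt (2 * k) ≠ 0 := by
      positivity
    have h2 : ((k : ℝ) / Real.exp 1) ^ k ≠ 0 := by
      have : (k:ℝ) ≠ 0 := Nat.cast_ne_zero.mpr hk
      positivity
    field_simp
  have hcB : (Nat.centralBinom n : ℝ) = (2*n).factorial / (n.factorial * n.factorial) := by
    have key := Nat.choose_mul_factorial_mul_factorial (show n ≤ 2*n by omega)
    have h2 : 2*n - n = n := by omega
    rw [h2] at key
    have keyR : (Nat.centralBinom n : ℝ) * n.factorial * n.factorial = (2*n).factorial := by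
      rw [Nat.centralBinom]; exact_mod_cast key
    have hne : (n.factorial : ℝ) ≠ 0 := by positivity
    field_simp
    linarith [keyR]
  have h1 := hfact (2*n) (by omega)
  have h2 := hfact n hn
  have hn0 : (0:ℝ) < n := by positivity
  have c2n : ((2*n:ℕ):ℝ) = 2*(n:ℝ) := by push_cast; ring
  rw [c2n] at h1
  have hs4 : Real.sqrt (2 * (2*(n:ℝ))) = 2 * Real.sqrt n := by
    rw [show (2:ℝ) * (2*(n:ℝ)) = 2^2 * n by ring,
      Real.sqrt_mul (by positivity), Real.sqrt_sq (by norm_num)]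
  have hs2 : Real.sqrt (2 * (n:ℝ)) = Real.sqrt 2 * Real.sqrt n :=
    Real.sqrt_mul (by norm_num) _
  have hpow : ((2*(n:ℝ)) / Real.exp 1) ^ (2*n) = 4 ^ n * (((n:ℝ) / Real.exp 1) ^ n) ^ 2 := by
    rw [show (2:ℝ) * (n:ℝ) / Real.exp 1 = 2 * ((n:ℝ)/Real.exp 1) by ring, mul_pow,
      show (2:ℝ)^(2*n) = 4^n by rw [pow_mul]; norm_num]
    ring
  rw [hs4, hpow] at h1
  rw [hs2] at h2
  obtain ⟨j, rfl⟩ := Nat.exists_eq_succ_of_ne_zero hn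
  have hspos : 0 < Stirling.stirlingSeq (j+1) := Stirling.stirlingSeq'_pos j
  have hs2pos : 0 < Stirling.stirlingSeq (2*(j+1)) := by
    have : 2*(j+1) = (2*j+1)+1 := by omega
    rw [this]; exact Stirling.stirlingSeq'_pos _
  rw [aSeq, hcB, h1, h2]
  set n := j + 1
  set x := Real.sqrt (n:ℝ) with hx
  set y := ((n:ℝ) / Real.exp 1) ^ n with hy
  set S := Stirling.stirlingSeq n
  set S2 := Stirling.stirlingSeq (2*n)
  have hxpos : 0 < x := Real.sqrt_pos.mpr hn0
  have hypos : 0 < y := by rw [hy]; positivity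
  have hs2sq : Real.sqrt 2 * Real.sqrt 2 = 2 := Real.mul_self_sqrt (by norm_num)
  have h4 : (0:ℝ) < 4^n := by positivity
  rw [div_eq_div_iff (by positivity) (by positivity)]
  field_simp
  ring_nf
  rw [Real.sq_sqrt (by norm_num : (0:ℝ) ≤ 2)]

lemma aSeq_mono : Monotone aSeq := by
  apply monotone_nat_of_le_succ
  intro n
  rcases Nat.eq_zero_or_pos n with rfl | hn
  · have : aSeq 0 = 0 := by simp [aSeq]
    rw [this]
    unfold aSeq; positivity
  · have key := Nat.succ_mul_centralBinom_succ n
    have keyR : ((n:ℝ)+1) * Nat.centralBinom (n+1) = 2*(2*n+1) * Nat.centralBinom n := by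
      exact_mod_cast key
    have hcpos : (0:ℝ) < Nat.centralBinom n := by
      exact_mod_cast Nat.centralBinom_pos n
    have hsq : 4*((n:ℝ)+1) * Real.sqrt n ≤ 2*(2*n+1) * Real.sqrt (n+1) := by
      have h1 : 4*((n:ℝ)+1) * Real.sqrt n = Real.sqrt ((4*(n+1))^2 * n) := by
        rw [Real.sqrt_mul (by positivity), Real.sqrt_sq (by positivity)]
      have h2 : 2*(2*(n:ℝ)+1) * Real.sqrt (n+1) = Real.sqrt ((2*(2*n+1))^2 * (n+1)) := by
        rw [Real.sqrt_mul (by positivity), Real.sqrt_sq (by positivity)]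
      rw [h1, h2]
      apply Real.sqrt_le_sqrt
      have hn' : (1:ℝ) ≤ n := by exact_mod_cast hn
      nlinarith
    unfold aSeq
    rw [div_le_div_iff₀ (by positivity) (by positivity)]
    have hcB1 : (Nat.centralBinom (n+1) : ℝ) = 2*(2*n+1) * Nat.centralBinom n / ((n:ℝ)+1) := by
      field_simp
      linarith [keyR]
    push_cast
    rw [hcB1]
    have hnp : (0:ℝ) < (n:ℝ)+1 := by positivity
    rw [pow_succ]
    rw [div_mul_eq_mul_div, div_mul_eq_mul_div, le_div_iff₀ hnp]
    have hsn : 0 ≤ Real.sqrt (n:ℝ) := Real.sqrt_nonneg _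
    have h4 : (0:ℝ) < 4^n := by positivity
    nlinarith [mul_le_mul_of_nonneg_left hsq (le_of_lt (mul_pos hcpos h4))]

open Filter Topology in
lemma aSeq_tendsto : Tendsto aSeq atTop (𝓝 (1 / Real.sqrt π)) := by
  have h2n : Tendsto (fun n : ℕ => 2*n) atTop atTop :=
    Filter.tendsto_atTop_atTop.mpr fun b => ⟨b, fun a ha => by omega⟩
  have h1 : Tendsto (fun n => Stirling.stirlingSeq (2*n)) atTop (𝓝 (Real.sqrt π)) :=
    Stirling.tendsto_stirlingSeq_sqrt_pi.comp h2n
  have h2 : Tendsto (fun n => (Stirling.stirlingSeq n)^2) atTop (𝓝 ((Real.sqrt π)^2)) :=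
    Stirling.tendsto_stirlingSeq_sqrt_pi.pow 2
  have hpi : (0:ℝ) < π := Real.pi_pos
  have hne : (Real.sqrt π)^2 ≠ 0 := by positivity
  have h3 := h1.div h2 hne
  have heq : Real.sqrt π / (Real.sqrt π)^2 = 1 / Real.sqrt π := by
    rw [sq]
    field_simp
  rw [heq] at h3
  apply h3.congr'
  filter_upwards [eventually_ge_atTop 1] with n hn
  exact (aSeq_eq n (by omega)).symm

lemma centralBinom_le_real (n : ℕ) (hn : n ≠ 0) :
    (Nat.centralBinom n : ℝ) ≤ 4^n / Real.sqrt (π * n) := by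
  have h := aSeq_mono.ge_of_tendsto aSeq_tendsto n
  have hn0 : (0:ℝ) < n := by exact_mod_cast Nat.pos_of_ne_zero hn
  have hs : Real.sqrt (π * n) = Real.sqrt π * Real.sqrt n := Real.sqrt_mul Real.pi_pos.le _
  rw [hs]
  have h4 : (0:ℝ) < 4^n := by positivity
  have hsp : (0:ℝ) < Real.sqrt π := Real.sqrt_pos.mpr Real.pi_pos
  have hsn : (0:ℝ) < Real.sqrt n := Real.sqrt_pos.mpr hn0
  unfold aSeq at h
  rw [div_le_div_iff₀ (by positivity) (by positivity)] at h
  rw [le_div_iff₀ (by positivity)]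
  nlinarith
lemma sum_Icc_choose_eq (n : ℕ) :
    2 * ∑ h ∈ Finset.Icc n (2*n), (2*n).choose h = 4^n + Nat.centralBinom n := by
  have hrefl : ∑ h ∈ Finset.Icc n (2*n), (2*n).choose h
      = ∑ h ∈ Finset.Icc 0 n, (2*n).choose h := by
    apply Finset.sum_nbij' (fun h => 2*n - h) (fun h => 2*n - h)
    · intro a ha; simp only [Finset.mem_Icc] at *; omega
    · intro a ha; simp only [Finset.mem_Icc] at *; omega
    · intro a ha; simp only [Finset.mem_Icc] at ha; omega
    · intro a ha; simp only [Finset.mem_Icc] at ha; omega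
    · intro a ha
      simp only [Finset.mem_Icc] at ha
      exact (Nat.choose_symm (by omega)).symm
  have hIccIco : Finset.Icc n (2*n) = Finset.Ico n (2*n+1) := by
    rw [Finset.Ico_add_one_right_eq_Icc]
  have hIcc0 : Finset.Icc 0 n = Finset.Ico 0 (n+1) := by
    rw [Finset.Ico_add_one_right_eq_Icc]
  have hsplit : (∑ h ∈ Finset.Ico 0 n, (2*n).choose h)
      + ∑ h ∈ Finset.Ico n (2*n+1), (2*n).choose h
      = ∑ h ∈ Finset.Ico 0 (2*n+1), (2*n).choose h :=
    Finset.sum_Ico_consecutive _ (by omega) (by omega)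
  have htot : ∑ h ∈ Finset.Ico 0 (2*n+1), (2*n).choose h = 4^n := by
    rw [← Finset.range_eq_Ico, Nat.sum_range_choose, pow_mul]; norm_num
  have hsucc : ∑ h ∈ Finset.Ico 0 (n+1), (2*n).choose h
      = (∑ h ∈ Finset.Ico 0 n, (2*n).choose h) + (2*n).choose n := by
    rw [← Finset.range_eq_Ico, Finset.sum_range_succ, Finset.range_eq_Ico]
  rw [hIccIco, hIcc0] at hrefl
  rw [hIccIco]
  have : Nat.centralBinom n = (2*n).choose n := Nat.centralBinom_eq_two_mul_choose n
  omega

theorem stmt15 (m : ℕ) (hm : Even m) (hm0 : 0 < m) (p : ℝ) (hp0 : 0 ≤ p) (hp : p < 1 / 2) :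
    binomTail m (m / 2) p
        ≤ (2 * Real.sqrt (p * (1 - p))) ^ m * (1 / 2 + 1 / Real.sqrt (2 * π * m)) ∧
    binomTail m (m / 2) p ≤ (2 * Real.sqrt (p * (1 - p))) ^ m := by

  obtain ⟨n, rfl⟩ := hm
  have h2n : n + n = 2 * n := by ring
  have hn : 0 < n := by omega
  have hq : 0 < 1 - p := by linarith
  have hpq : p ≤ 1 - p := by linarith
  have hpq0 : 0 ≤ p * (1 - p) := mul_nonneg hp0 hq.le
  have hdiv : (n + n) / 2 = n := by omega
  rw [hdiv]
  -- Step 1: term bound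
  have hterm : ∀ h ∈ Finset.Icc n (n + n),
      ((n+n).choose h : ℝ) * p ^ h * (1 - p) ^ (n + n - h)
        ≤ ((n+n).choose h : ℝ) * (p * (1 - p)) ^ n := by
    intro h hh
    simp only [Finset.mem_Icc] at hh
    have hk : h = n + (h - n) := by omega
    set k := h - n with hkdef
    have hqk : (0:ℝ) < (1 - p) ^ k := pow_pos hq k
    have hmul : p ^ h * (1 - p) ^ (n + n - h) * (1 - p) ^ k
        = (p * (1 - p)) ^ n * p ^ k := by
      rw [mul_pow, mul_assoc, ← pow_add, show n + n - h + k = n by omega]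
      rw [show h = n + k from hk, pow_add]
      ring
    have hbound : p ^ h * (1 - p) ^ (n + n - h) ≤ (p * (1 - p)) ^ n := by
      rw [← mul_le_mul_iff_of_pos_right hqk, hmul]
      calc (p * (1 - p)) ^ n * p ^ k ≤ (p * (1 - p)) ^ n * (1 - p) ^ k := by
            apply mul_le_mul_of_nonneg_left (pow_le_pow_left₀ hp0 hpq k) (by positivity)
        _ = (p * (1 - p)) ^ n * (1 - p) ^ k := rfl
    rw [mul_assoc]
    exact mul_le_mul_of_nonneg_left hbound (by positivity)
  have hsum1 : binomTail (n+n) n p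
      ≤ (p * (1 - p)) ^ n * ∑ h ∈ Finset.Icc n (n + n), ((n+n).choose h : ℝ) := by
    rw [binomTail, Finset.mul_sum]
    apply Finset.sum_le_sum
    intro h hh
    rw [mul_comm ((p * (1 - p)) ^ n)]
    exact hterm h hh
  -- Step 2: the sum value
  have hA : (∑ h ∈ Finset.Icc n (n + n), ((n+n).choose h : ℝ))
      = ((4:ℝ) ^ n + Nat.centralBinom n) / 2 := by
    have := sum_Icc_choose_eq n
    have hcast : (2:ℝ) * ∑ h ∈ Finset.Icc n (2*n), ((2*n).choose h : ℝ)
        = 4 ^ n + Nat.centralBinom n := by exact_mod_cast this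
    rw [h2n]
    linarith [hcast]
  -- rewrite RHS pieces
  have hpow2 : (2 * Real.sqrt (p * (1 - p))) ^ (n + n) = 4 ^ n * (p * (1 - p)) ^ n := by
    rw [mul_pow, show n + n = 2 * n from h2n, pow_mul, pow_mul,
      Real.sq_sqrt hpq0]
    norm_num
  have hsqrt : Real.sqrt (2 * π * (n + n : ℕ)) = 2 * Real.sqrt (π * n) := by
    have : (2:ℝ) * π * ((n + n : ℕ):ℝ) = 2 ^ 2 * (π * n) := by push_cast; ring
    rw [this, Real.sqrt_mul (by positivity), Real.sqrt_sq (by norm_num)]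
  have hcb := centralBinom_le_real n (by omega)
  have hspos : (0:ℝ) < Real.sqrt (π * n) := Real.sqrt_pos.mpr (by positivity)
  have h4pos : (0:ℝ) < (4:ℝ) ^ n := by positivity
  have hcbs : (Nat.centralBinom n : ℝ) * Real.sqrt (π * n) ≤ 4 ^ n := by
    rw [← le_div_iff₀ hspos]; exact hcb
  have hcbnn : (0:ℝ) ≤ Nat.centralBinom n := Nat.cast_nonneg _
  have first : binomTail (n+n) n p
      ≤ (2 * Real.sqrt (p * (1 - p))) ^ (n + n) * (1 / 2 + 1 / Real.sqrt (2 * π * (n + n : ℕ))) := by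
    rw [hpow2, hsqrt]
    refine hsum1.trans ?_
    rw [hA]
    have key : (p * (1 - p)) ^ n * (Nat.centralBinom n : ℝ)
        ≤ (p * (1 - p)) ^ n * (4 ^ n / Real.sqrt (π * n)) :=
      mul_le_mul_of_nonneg_left hcb (by positivity)
    have hinv : (1:ℝ) / (2 * (2 * Real.sqrt (π * n))) = (1/2) * (1/2) * (1 / Real.sqrt (π * n)) := by
      field_simp
    have hexp : 4 ^ n * (p * (1 - p)) ^ n * (1 / 2 + 1 / (2 * Real.sqrt (π * n)))
        = (p * (1 - p)) ^ n * 4 ^ n / 2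
          + (p * (1 - p)) ^ n * (4 ^ n / Real.sqrt (π * n)) / 2 := by
      field_simp
    rw [hexp]
    linarith [key]
  refine ⟨first, first.trans ?_⟩
  apply mul_le_of_le_one_right (by positivity)
  have h2le : (2:ℝ) ≤ Real.sqrt (2 * π * (n + n : ℕ)) := by
    rw [Real.le_sqrt' (by norm_num)]
    have hpi := Real.pi_gt_three
    have hn1 : (1:ℝ) ≤ (n:ℝ) := by exact_mod_cast hn
    push_cast
    nlinarith
  have : 1 / Real.sqrt (2 * π * (n + n : ℕ)) ≤ 1 / 2 :=
    one_div_le_one_div_of_le (by norm_num) h2le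
  linarith
end

section
/- For p ∈ [0, 1/4] and even m, (4p(1−p))^{m/2} ≤ exp(−3m(1/2−p)²/((1+4p)(1−p))) ≤ exp(−m(1−2p)²/2); for p ∈ [1/4, 1/2], (4p(1−p))^{m/2} ≤ exp(−m(1−2p)²/2) ≤ exp(−3m(1/2−p)²/((1+4p)(1−p))). -/
open Real

set_option maxHeartbeats 1000000 in
theorem stmt17 (m : ℕ) (hm : Even m) (hm0 : 0 < m) (p : ℝ) :
    (0 ≤ p → p ≤ 1 / 4 →
      (4 * p * (1 - p)) ^ (m / 2)
          ≤ Real.exp (-(3 * m * (1 / 2 - p) ^ 2) / ((1 + 4 * p) * (1 - p))) ∧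
      Real.exp (-(3 * m * (1 / 2 - p) ^ 2) / ((1 + 4 * p) * (1 - p)))
          ≤ Real.exp (-(m * (1 - 2 * p) ^ 2) / 2)) ∧
    (1 / 4 ≤ p → p ≤ 1 / 2 →
      (4 * p * (1 - p)) ^ (m / 2) ≤ Real.exp (-(m * (1 - 2 * p) ^ 2) / 2) ∧
      Real.exp (-(m * (1 - 2 * p) ^ 2) / 2)
          ≤ Real.exp (-(3 * m * (1 / 2 - p) ^ 2) / ((1 + 4 * p) * (1 - p)))) := by
  obtain ⟨k, hk⟩ := hm
  have hk2 : m / 2 = k := by omega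
  have hmr : (m : ℝ) = 2 * k := by rw [hk]; push_cast; ring
  have hm0' : (0:ℝ) ≤ m := Nat.cast_nonneg m
  -- base inequality 1: Chernoff base vs Bernstein base, for 0 ≤ p ≤ 1/2
  have base1 : ∀ q : ℝ, 0 ≤ q → q ≤ 1/2 →
      4 * q * (1 - q) ≤ Real.exp (-(6 * (1/2 - q)^2) / ((1 + 4*q) * (1 - q))) := by
    intro q h0 h1
    have hD : (0:ℝ) < (1 + 4*q) * (1 - q) := by nlinarith
    set c : ℝ := (6 * (1/2 - q)^2) / ((1 + 4*q) * (1 - q)) with hc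
    have hc3 : c ≤ 3 := by
      rw [hc, div_le_iff₀ hD]
      nlinarith
    have h1c : (0:ℝ) ≤ 1 - c/3 := by linarith
    have hlow : (1 - c/3)^3 ≤ Real.exp (-c) := by
      have h := Real.add_one_le_exp (-c/3)
      calc (1 - c/3)^3 ≤ (Real.exp (-c/3))^3 := by
            apply pow_le_pow_left₀ h1c; linarith
        _ = Real.exp (-c) := by
            rw [← Real.exp_nat_mul]
            congr 1; ring
    have hrepr : (1:ℝ) - c/3 = ((1 + 4*q) * (1 - q) - 2*(1/2 - q)^2) / ((1 + 4*q) * (1 - q)) := by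
      have hq1 : (1:ℝ) - q ≠ 0 := by linarith
      have hq4 : (1:ℝ) + 4*q ≠ 0 := by linarith
      rw [hc]; field_simp; ring
    have key : 4 * q * (1 - q) ≤ (1 - c/3)^3 := by
      rw [hrepr, div_pow, le_div_iff₀ (by positivity)]
      have hfact : ((1 + 4*q) * (1 - q) - 2*(1/2 - q)^2)^3
          - 4 * q * (1 - q) * ((1 + 4*q) * (1 - q))^3
          = (1 - 2*q)^3 * (1/8 + q/2 + 5/2*q^2 + 21*q^3 - 56*q^4 + 32*q^5) := by
        ring
      have hu3 : (0:ℝ) ≤ (1 - 2*q)^3 := pow_nonneg (by linarith) 3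
      have hr : (0:ℝ) ≤ 1/8 + q/2 + 5/2*q^2 + 21*q^3 - 56*q^4 + 32*q^5 := by
        nlinarith [mul_nonneg (mul_nonneg h0 h0) (mul_nonneg h0 h0), sq_nonneg q,
          mul_nonneg (mul_nonneg (mul_nonneg h0 h0) (mul_nonneg h0 h0))
            (by linarith : (0:ℝ) ≤ 1/2 - q),
          mul_nonneg (mul_nonneg (mul_nonneg h0 h0) h0) (by linarith : (0:ℝ) ≤ 1/2 - q)]
      nlinarith [mul_nonneg hu3 hr]
    calc 4 * q * (1 - q) ≤ (1 - c/3)^3 := key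
      _ ≤ Real.exp (-c) := hlow
      _ = Real.exp (-(6 * (1/2 - q)^2) / ((1 + 4*q) * (1 - q))) := by rw [hc, neg_div]
  -- base inequality 2: Chernoff base vs Hoeffding base
  have base2 : ∀ q : ℝ, 4 * q * (1 - q) ≤ Real.exp (-(1 - 2*q)^2) := by
    intro q
    have := Real.add_one_le_exp (-(1 - 2*q)^2)
    nlinarith
  -- powering lemma
  have pow1 : ∀ q : ℝ, 0 ≤ q → q ≤ 1/2 →
      (4 * q * (1 - q)) ^ (m / 2)
        ≤ Real.exp (-(3 * m * (1/2 - q)^2) / ((1 + 4*q) * (1 - q))) := by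
    intro q h0 h1
    have hbase : (0:ℝ) ≤ 4 * q * (1 - q) := by nlinarith
    have h := pow_le_pow_left₀ hbase (base1 q h0 h1) k
    rw [hk2]
    refine h.trans_eq ?_
    rw [← Real.exp_nat_mul]
    rw [hmr, ← mul_div_assoc]
    congr 1
    ring
  have pow2 : ∀ q : ℝ, 0 ≤ q → q ≤ 1/2 →
      (4 * q * (1 - q)) ^ (m / 2) ≤ Real.exp (-(m * (1 - 2*q)^2) / 2) := by
    intro q h0 h1
    have hbase : (0:ℝ) ≤ 4 * q * (1 - q) := by nlinarith
    have h := pow_le_pow_left₀ hbase (base2 q) k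
    rw [hk2]
    refine h.trans_eq ?_
    rw [← Real.exp_nat_mul]
    congr 1
    rw [hmr]
    ring
  constructor
  · intro h0 h1
    refine ⟨pow1 p h0 (by linarith), ?_⟩
    apply Real.exp_le_exp.mpr
    have hD : (0:ℝ) < (1 + 4*p) * (1 - p) := mul_pos (by linarith) (by linarith)
    rw [div_le_div_iff₀ hD (by norm_num)]
    have hDle : (1 + 4*p) * (1 - p) ≤ 3/2 := by
      nlinarith [mul_nonneg (show (0:ℝ) ≤ 1 - 4*p by linarith) (show (0:ℝ) ≤ 1/2 - p by linarith)]
    nlinarith [mul_nonneg (mul_nonneg hm0' (sq_nonneg (1/2 - p)))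
      (show (0:ℝ) ≤ 3/2 - (1 + 4*p) * (1 - p) by linarith)]
  · intro h0 h1
    have h0' : (0:ℝ) ≤ p := by linarith
    refine ⟨pow2 p h0' h1, ?_⟩
    apply Real.exp_le_exp.mpr
    have hD : (0:ℝ) < (1 + 4*p) * (1 - p) := mul_pos (by linarith) (by linarith)
    rw [div_le_div_iff₀ (by norm_num) hD]
    have hDge : 3/2 ≤ (1 + 4*p) * (1 - p) := by
      nlinarith [mul_nonneg (show (0:ℝ) ≤ 4*p - 1 by linarith) (show (0:ℝ) ≤ 1/2 - p by linarith)]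
    nlinarith [mul_nonneg (mul_nonneg hm0' (sq_nonneg (1/2 - p)))
      (show (0:ℝ) ≤ (1 + 4*p) * (1 - p) - 3/2 by linarith)]
end

section
/- For odd n, integer k with −n/2 ≤ k ≤ n/2, and p ∈ [0,1], P[B(p,n+2) ≥ (n+2)/2 + k] − P[B(p,n) ≥ n/2 + k] = (p − 1/2 + k/(n+1)) · C(n+1, (n+1)/2 + k) · p^{(n+1)/2+k} (1−p)^{(n+1)/2−k}. -/
open Real Finset

lemma tail_split (n j : ℕ) (hjn : j ≤ n) (p : ℝ) :
    binomTail n j p = (n.choose j : ℝ) * p ^ j * (1 - p) ^ (n - j) + binomTail n (j + 1) p := by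
  unfold binomTail
  rw [Finset.Icc_eq_cons_Ioc hjn, Finset.sum_cons, Finset.Icc_add_one_left_eq_Ioc]

lemma step (n j : ℕ) (hjn : j ≤ n) (p : ℝ) :
    binomTail (n + 1) (j + 1) p
      = binomTail n (j + 1) p + (n.choose j : ℝ) * p ^ (j + 1) * (1 - p) ^ (n - j) := by
  have key : ∀ i ∈ Finset.Icc j n,
      (((n + 1).choose (i + 1) : ℝ)) * p ^ (i + 1) * (1 - p) ^ (n + 1 - (i + 1))
        = ((n.choose i : ℝ) * p ^ i * (1 - p) ^ (n - i)) * p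
          + ((n.choose (i + 1) : ℝ) * p ^ (i + 1) * (1 - p) ^ (n + 1 - (i + 1))) := by
    intro i hi
    simp only [Finset.mem_Icc] at hi
    have h1 : (n + 1).choose (i + 1) = n.choose i + n.choose (i + 1) := Nat.choose_succ_succ' n i
    have h2 : n + 1 - (i + 1) = n - i := by omega
    rw [h1, h2]
    push_cast
    ring
  unfold binomTail
  rw [show Finset.Icc (j + 1) (n + 1) = (Finset.Icc j n).map (addRightEmbedding 1) from
    by rw [Finset.map_add_right_Icc]]
  rw [Finset.sum_map]
  simp only [addRightEmbedding_apply]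
  rw [Finset.sum_congr rfl key, Finset.sum_add_distrib]
  have second : (∑ i ∈ Finset.Icc j n, ((n.choose (i + 1) : ℝ) * p ^ (i + 1) * (1 - p) ^ (n + 1 - (i + 1))))
      = ∑ h ∈ Finset.Icc (j + 1) n, (n.choose h : ℝ) * p ^ h * (1 - p) ^ (n - h) * (1 - p) := by
    have : (∑ i ∈ Finset.Icc j n, ((n.choose (i + 1) : ℝ) * p ^ (i + 1) * (1 - p) ^ (n + 1 - (i + 1))))
        = ∑ h ∈ Finset.Icc (j + 1) (n + 1), (n.choose h : ℝ) * p ^ h * (1 - p) ^ (n + 1 - h) := by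
      rw [show Finset.Icc (j + 1) (n + 1) = (Finset.Icc j n).map (addRightEmbedding 1) from
        by rw [Finset.map_add_right_Icc]]
      rw [Finset.sum_map]
      simp only [addRightEmbedding_apply]
    rw [this, Finset.sum_Icc_succ_top (by omega : j + 1 ≤ n + 1)]
    simp only [Nat.choose_succ_self, Nat.cast_zero, zero_mul]
    rw [add_zero]
    refine Finset.sum_congr rfl fun h hh => ?_
    simp only [Finset.mem_Icc] at hh
    have : n + 1 - h = (n - h) + 1 := by omega
    rw [this, pow_succ]; ring
  rw [second]
  have first : (∑ i ∈ Finset.Icc j n, ((n.choose i : ℝ) * p ^ i * (1 - p) ^ (n - i)) * p)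
      = ((n.choose j : ℝ) * p ^ j * (1 - p) ^ (n - j)) * p
        + ∑ i ∈ Finset.Icc (j + 1) n, ((n.choose i : ℝ) * p ^ i * (1 - p) ^ (n - i)) * p := by
    rw [Finset.Icc_eq_cons_Ioc hjn, Finset.sum_cons, Finset.Icc_add_one_left_eq_Ioc]
  rw [first]
  rw [add_assoc, ← Finset.sum_add_distrib]
  have comb : (∑ i ∈ Finset.Icc (j + 1) n,
      (((n.choose i : ℝ) * p ^ i * (1 - p) ^ (n - i)) * p
        + (n.choose i : ℝ) * p ^ i * (1 - p) ^ (n - i) * (1 - p)))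
      = ∑ i ∈ Finset.Icc (j + 1) n, (n.choose i : ℝ) * p ^ i * (1 - p) ^ (n - i) := by
    refine Finset.sum_congr rfl fun i _ => by ring
  rw [comb]
  ring

theorem stmt18 (n : ℕ) (hn : Odd n) (k : ℤ) (hk1 : -(n : ℤ) ≤ 2 * k) (hk2 : 2 * k ≤ (n : ℤ))
    (p : ℝ) (hp0 : 0 ≤ p) (hp1 : p ≤ 1) :
    binomTail (n + 2) (((n : ℤ) + 3) / 2 + k).toNat p
        - binomTail n (((n : ℤ) + 1) / 2 + k).toNat p
      = (p - 1 / 2 + (k : ℝ) / ((n : ℝ) + 1))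
          * ((n + 1).choose (((n : ℤ) + 1) / 2 + k).toNat : ℝ)
          * p ^ (((n : ℤ) + 1) / 2 + k).toNat
          * (1 - p) ^ (((n : ℤ) + 1) / 2 - k).toNat := by
  obtain ⟨m, hm⟩ := hn
  subst hm
  have hc1 : ((2 * m + 1 : ℕ) : ℤ) = 2 * (m : ℤ) + 1 := by push_cast; ring
  rw [hc1] at hk1 hk2 ⊢
  obtain ⟨j, hjk⟩ : ∃ j : ℕ, (j : ℤ) = (m : ℤ) + k := ⟨((m : ℤ) + k).toNat, by omega⟩
  have hjm : j ≤ 2 * m := by omega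
  have e1 : ((2 * (m : ℤ) + 1 + 3) / 2 + k).toNat = j + 2 := by omega
  have e2 : ((2 * (m : ℤ) + 1 + 1) / 2 + k).toNat = j + 1 := by omega
  have e3 : ((2 * (m : ℤ) + 1 + 1) / 2 - k).toNat = 2 * m + 1 - j := by omega
  rw [e1, e2, e3]
  have s1 := step (2 * m + 2) (j + 1) (by omega) p
  have s2 := step (2 * m + 1) (j + 1) (by omega) p
  have s3 := tail_split (2 * m + 1) (j + 1) (by omega) p
  have E0 : 2 * m + 1 + 2 = 2 * m + 2 + 1 := by omega
  have E1 : 2 * m + 2 - (j + 1) = 2 * m + 1 - j := by omega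
  have E2 : 2 * m + 1 - (j + 1) = 2 * m - j := by omega
  have E3 : 2 * m + 1 - j = (2 * m - j) + 1 := by omega
  rw [E1] at s1
  rw [E2] at s2 s3
  rw [E0, s1, s2, s3, E3, pow_succ]
  have hc := Nat.choose_mul_succ_eq (2 * m + 1) (j + 1)
  have hc' : ((2 * m + 1).choose (j + 1) : ℝ) * (2 * (m : ℝ) + 2)
      = ((2 * m + 2).choose (j + 1) : ℝ) * (2 * (m : ℝ) + 1 - j) := by
    have h4 : 2 * m + 1 + 1 - (j + 1) = 2 * m + 1 - j := by omega
    rw [h4] at hc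
    have := congrArg (Nat.cast : ℕ → ℝ) hc
    push_cast [Nat.cast_sub (by omega : j ≤ 2 * m + 1)] at this
    convert this using 2 <;> push_cast <;> ring
  have hkr : (k : ℝ) = (j : ℝ) - (m : ℝ) := by
    have := congrArg (Int.cast : ℤ → ℝ) hjk
    push_cast at this
    linarith
  have hchoose2 : ((2 * m + 1 + 1).choose (j + 1) : ℝ) = ((2 * m + 2).choose (j + 1) : ℝ) := by
    norm_num
  rw [hkr, hchoose2]
  have hne : (2 * (m : ℝ) + 1 + 1) ≠ 0 := by positivity
  push_cast
  field_simp
  linear_combination (-(p^(j+1) * (1-p)^(2*m-j) * (1-p) * 2)) * hc'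
end

section
/- For odd n, integer k with 0 ≤ k < n/2, and p ∈ (0,1), P[B(p,n) ≥ n/2 + k] = p^{2k+1} − (p/(1−p))^k · Σ_{j=k+1}^{(n−1)/2} (1/2 − p − k/(2j)) C(2j, j+k) (p(1−p))^j. -/
open Real

lemma bt_drop (n x : ℕ) (h : x ≤ n) (p : ℝ) :
    binomTail n x p = (n.choose x : ℝ) * p ^ x * (1 - p) ^ (n - x) + binomTail n (x + 1) p := by
  unfold binomTail
  rw [Finset.Icc_eq_cons_Ioc h, Finset.sum_cons, ← Finset.Icc_add_one_left_eq_Ioc]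

lemma bt_pascal (n y : ℕ) (h : y ≤ n) (p : ℝ) :
    binomTail (n + 1) (y + 1) p
      = binomTail n (y + 1) p + (n.choose y : ℝ) * p ^ (y + 1) * (1 - p) ^ (n - y) := by
  have hsplit : ∑ h' ∈ Finset.Icc (y+1) (n+1), ((n+1).choose h' : ℝ) * p ^ h' * (1-p) ^ (n+1-h')
      = (∑ h' ∈ Finset.Icc (y+1) (n+1), (n.choose h' : ℝ) * p ^ h' * (1-p) ^ (n+1-h'))
      + ∑ h' ∈ Finset.Icc (y+1) (n+1), (n.choose (h'-1) : ℝ) * p ^ h' * (1-p) ^ (n+1-h') := by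
    rw [← Finset.sum_add_distrib]
    apply Finset.sum_congr rfl
    intro h' hh'
    simp only [Finset.mem_Icc] at hh'
    obtain ⟨t, rfl⟩ : ∃ t, h' = t + 1 := ⟨h' - 1, by omega⟩
    rw [Nat.choose_succ_succ]
    push_cast [Nat.succ_eq_add_one]
    ring
  have h1 : ∑ h' ∈ Finset.Icc (y+1) (n+1), (n.choose h' : ℝ) * p ^ h' * (1-p) ^ (n+1-h')
      = (1-p) * binomTail n (y+1) p := by
    rw [Finset.sum_Icc_succ_top (by omega)]
    have hz : (n.choose (n+1) : ℝ) = 0 := by simp [Nat.choose_eq_zero_of_lt]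
    rw [hz]
    unfold binomTail
    rw [Finset.mul_sum]
    rw [Finset.sum_congr rfl (fun h' hh' => ?_)]
    · ring
    · simp only [Finset.mem_Icc] at hh'
      have : n + 1 - h' = (n - h') + 1 := by omega
      rw [this]
      ring
  have h2 : ∑ h' ∈ Finset.Icc (y+1) (n+1), (n.choose (h'-1) : ℝ) * p ^ h' * (1-p) ^ (n+1-h')
      = p * binomTail n y p := by
    rw [← Finset.map_add_right_Icc y n 1, Finset.sum_map]
    unfold binomTail
    rw [Finset.mul_sum]
    apply Finset.sum_congr rfl
    intro j hj
    simp only [Finset.mem_Icc] at hj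
    simp only [addRightEmbedding, Function.Embedding.coeFn_mk]
    have e1 : j + 1 - 1 = j := by omega
    have e2 : n + 1 - (j + 1) = n - j := by omega
    rw [e1, e2]
    ring
  show ∑ h' ∈ Finset.Icc (y+1) (n+1), ((n+1).choose h' : ℝ) * p ^ h' * (1-p) ^ (n+1-h') = _
  rw [hsplit, h1, h2, bt_drop n y h p]
  ring

lemma natkey (m k : ℕ) (hk : k ≤ m) :
    (2*m+2) * (2*m+1).choose (m+1+k) = (m+1-k) * (2*m+2).choose (m+1+k) := by
  have c1 : (2*m+1).choose (m+1+k) = (2*m+1).choose (m-k) := by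
    rw [show m-k = (2*m+1)-(m+1+k) from by omega]
    exact (Nat.choose_symm (by omega)).symm
  have c2 : (2*m+2).choose (m+1+k) = (2*m+2).choose (m+1-k) := by
    rw [show m+1-k = (2*m+2)-(m+1+k) from by omega]
    exact (Nat.choose_symm (by omega)).symm
  have h := Nat.add_one_mul_choose_eq (2*m+1) (m-k)
  have e : m - k + 1 = m + 1 - k := by omega
  rw [c1, c2, ← e]
  simpa [Nat.succ_eq_add_one, mul_comm] using h

lemma step_alg (m k : ℕ) (hk : k ≤ m) (p : ℝ) (hp0 : 0 < p) (hp1 : p < 1) :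
    -(((2*m+1).choose (m+1+k) : ℝ) * p ^ (m+1+k) * (1-p) ^ (m-k))
      + ((2*m+1).choose (m+1+k) : ℝ) * p ^ (m+1+k+1) * (1-p) ^ (m-k)
      + ((2*m+1+1).choose (m+1+k) : ℝ) * p ^ (m+1+k+1) * (1-p) ^ (m+1-k)
    = -((p/(1-p)) ^ k * ((1/2 - p - (k:ℝ)/(2*((m+1 : ℕ):ℝ)))
        * (((2*(m+1)).choose ((m+1)+k) : ℕ) : ℝ) * (p*(1-p)) ^ (m+1))) := by
  have hq : (1:ℝ) - p ≠ 0 := by linarith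
  have key : ((2*m+1).choose (m+1+k) : ℝ)
      = ((m:ℝ)+1-(k:ℝ)) * ((2*m+1+1).choose (m+1+k) : ℝ) / (2*(m:ℝ)+2) := by
    have h0 := natkey m k hk
    have hc : (((2*m+2) * (2*m+1).choose (m+1+k) : ℕ) : ℝ)
        = (((m+1-k) * (2*m+2).choose (m+1+k) : ℕ) : ℝ) := by exact_mod_cast h0
    push_cast [Nat.cast_sub (by omega : k ≤ m+1)] at hc
    rw [show 2*m+1+1 = 2*m+2 from rfl]
    field_simp
    linarith [hc]
  have hch : (((2*(m+1)).choose ((m+1)+k) : ℕ) : ℝ) = ((2*m+1+1).choose (m+1+k) : ℝ) := by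
    rw [show 2*(m+1) = 2*m+1+1 from by ring]
  have hcast : ((m+1 : ℕ) : ℝ) = (m:ℝ)+1 := by push_cast; ring
  rw [key, hch, hcast, pow_sub₀ _ hq (by omega : k ≤ m), pow_sub₀ _ hq (by omega : k ≤ m+1),
      mul_pow]
  have hm1 : (2*(m:ℝ)+2) ≠ 0 := by positivity
  rw [div_pow]
  field_simp
  ring

lemma step_full (m k : ℕ) (hk : k ≤ m) (p : ℝ) (hp0 : 0 < p) (hp1 : p < 1)
    (ih : binomTail (2*m+1) (m+1+k) p
      = p ^ (2*k+1)
        - (p / (1 - p)) ^ k * ∑ j ∈ Finset.Icc (k + 1) m,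
            (1 / 2 - p - (k : ℝ) / (2 * (j : ℝ)))
              * (((2 * j).choose (j + k) : ℕ) : ℝ) * (p * (1 - p)) ^ j) :
    binomTail ((2*m+2)+1) ((m+1+k)+1) p
      = p ^ (2*k+1)
        - (p / (1 - p)) ^ k * ∑ j ∈ Finset.Icc (k + 1) (m+1),
            (1 / 2 - p - (k : ℝ) / (2 * (j : ℝ)))
              * (((2 * j).choose (j + k) : ℕ) : ℝ) * (p * (1 - p)) ^ j := by
  rw [bt_pascal (2*m+2) (m+1+k) (by omega) p,
      show 2*m+2 = (2*m+1)+1 from rfl,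
      bt_pascal (2*m+1) (m+1+k) (by omega) p]
  have hdrop : binomTail (2*m+1) (m+1+k+1) p
      = binomTail (2*m+1) (m+1+k) p
        - ((2*m+1).choose (m+1+k) : ℝ) * p ^ (m+1+k) * (1-p) ^ (2*m+1-(m+1+k)) := by
    linarith [bt_drop (2*m+1) (m+1+k) (by omega) p]
  rw [hdrop, ih, Finset.sum_Icc_succ_top (by omega)]
  rw [show (2*m+1) - (m+1+k) = m - k from by omega,
      show (2*m+1+1) - (m+1+k) = m + 1 - k from by omega]
  rw [mul_add]
  linear_combination step_alg m k hk p hp0 hp1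

lemma main_ind (k d : ℕ) (p : ℝ) (hp0 : 0 < p) (hp1 : p < 1) :
    binomTail (2*(k+d)+1) (k+d+1+k) p
      = p ^ (2*k+1)
        - (p / (1 - p)) ^ k * ∑ j ∈ Finset.Icc (k + 1) (k+d),
            (1 / 2 - p - (k : ℝ) / (2 * (j : ℝ)))
              * (((2 * j).choose (j + k) : ℕ) : ℝ) * (p * (1 - p)) ^ j := by
  induction d with
  | zero =>
    rw [Finset.Icc_eq_empty (by omega), Finset.sum_empty]
    rw [show k+0+1+k = 2*k+1 from by ring, show 2*(k+0)+1 = 2*k+1 from by ring]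
    unfold binomTail
    rw [Finset.Icc_self, Finset.sum_singleton]
    simp
  | succ d ih =>
    rw [show 2*(k+(d+1))+1 = (2*(k+d)+2)+1 from by ring,
        show k+(d+1)+1+k = ((k+d)+1+k)+1 from by ring,
        show k+(d+1) = (k+d)+1 from by ring]
    exact step_full (k+d) k (by omega) p hp0 hp1 ih

theorem stmt19 (n k : ℕ) (hn : Odd n) (hk : 2 * k < n) (p : ℝ) (hp0 : 0 < p) (hp1 : p < 1) :
    binomTail n ((n + 1) / 2 + k) p
      = p ^ (2 * k + 1)
        - (p / (1 - p)) ^ k * ∑ j ∈ Finset.Icc (k + 1) ((n - 1) / 2),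
            (1 / 2 - p - (k : ℝ) / (2 * (j : ℝ)))
              * (((2 * j).choose (j + k) : ℕ) : ℝ) * (p * (1 - p)) ^ j := by
  obtain ⟨m, rfl⟩ := hn
  have hkm : k ≤ m := by omega
  have h := main_ind k (m - k) p hp0 hp1
  rw [show (2*m+1+1)/2 + k = k+(m-k)+1+k from by omega,
      show (2*m+1-1)/2 = k+(m-k) from by omega,
      show 2*m+1 = 2*(k+(m-k))+1 from by omega]
  exact h
end
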